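/- arXiv:2306.16421 — 6 statements merged into one kernel-verified Lean document; each statement's English description precedes it below -/
import Mathlib

section
/- Let R be a nearfield. In R every equation 0 = α·x + β·y with α·x = -β·y can be multiplied on the right: (α·x + β·y)·γ = α·x·γ + β·y·γ for such elements, i.e. right distributivity holds across sums equal to zero. -/
open scoped BigOperators

/-- A (left) nearfield: a zero-symmetric (left) nearring whose nonzero
elements form a multiplicative group. The additive group is abelian. -/
class Nearfield (R : Type*) extends AddCommGroup R, One R, Mul R, Inv R where
  protected mul_assoc : ∀ a b c : R, a * b * c = a * (b * c)
  protected left_distrib : ∀ a b c : R, a * (b + c) = a * b + a * c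
  protected zero_mul : ∀ a : R, (0 : R) * a = 0
  protected mul_zero : ∀ a : R, a * (0 : R) = 0
  protected one_mul : ∀ a : R, (1 : R) * a = a
  protected mul_one : ∀ a : R, a * (1 : R) = a
  protected one_ne_zero : (1 : R) ≠ 0
  protected mul_inv_cancel : ∀ a : R, a ≠ 0 → a * a⁻¹ = 1
  protected inv_mul_cancel : ∀ a : R, a ≠ 0 → a⁻¹ * a = 1

namespace Nearfield

/-- A nearfield is proper if it is not a skewfield (right distributivity fails). -/
def IsProper (R : Type*) [Nearfield R] : Prop :=
  ∃ a b c : R, (a + b) * c ≠ a * c + b * c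

variable {R : Type*} [Nearfield R]

/-- Right scalar multiplication on `R^n`, applied coordinatewise. -/
def vsmul {n : ℕ} (v : Fin n → R) (r : R) : Fin n → R := fun i => v i * r

/-- An `R`-subgroup of `R^n`: an additive subgroup closed under right scalar
multiplication. -/
def IsRSubgroup {n : ℕ} (H : Set (Fin n → R)) : Prop :=
  (0 : Fin n → R) ∈ H ∧ (∀ x ∈ H, ∀ y ∈ H, x + y ∈ H) ∧
    (∀ x ∈ H, -x ∈ H) ∧ (∀ x ∈ H, ∀ r : R, vsmul x r ∈ H)

/-- `gen S` is the smallest `R`-subgroup containing `S`. -/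
def gen {n : ℕ} (S : Set (Fin n → R)) : Set (Fin n → R) :=
  ⋂₀ {H : Set (Fin n → R) | IsRSubgroup H ∧ S ⊆ H}

/-- The support of a vector. -/
def supp {n : ℕ} (u : Fin n → R) : Set (Fin n) := {i | u i ≠ 0}

/-- `dirSum u = { Σ_i u_i r_i : r_i ∈ R }`. -/
def dirSum {n ℓ : ℕ} (u : Fin ℓ → Fin n → R) : Set (Fin n → R) :=
  {v | ∃ r : Fin ℓ → R, v = ∑ i, vsmul (u i) (r i)}

/-- The "scalar product" `⟨x,y⟩ = Σ_i x_i·y_i`. -/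
def dot {n : ℕ} (x y : Fin n → R) : R := ∑ i, x i * y i

/-- The weight of a vector: the number of its nonzero coordinates. -/
noncomputable def weight {n : ℕ} (u : Fin n → R) : ℕ := (supp u).ncard

/-- A vector is simple if it has weight one or two. -/
def IsSimple {n : ℕ} (u : Fin n → R) : Prop := weight u = 1 ∨ weight u = 2

/-- The orthogonal set `D^⊥`. -/
def perp {n : ℕ} (D : Set (Fin n → R)) : Set (Fin n → R) :=
  {x | ∀ e ∈ D, dot e x = 0}

/-- `c(k,R)`: nonzero vectors of `R^k` whose first nonzero coordinate is `1`. -/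
def cSet (R : Type*) [Nearfield R] (k : ℕ) : Set (Fin k → R) :=
  {u | ∃ i : Fin k, u i = 1 ∧ ∀ j : Fin k, j < i → u j = 0}

/-- The seed number of `T`: the least size of a set generating `T`. -/
noncomputable def seed {n : ℕ} (T : Set (Fin n → R)) : ℕ :=
  sInf {k | ∃ S : Finset (Fin n → R), S.card = k ∧ gen (↑S : Set (Fin n → R)) = T}

/-- Iterated linear-combination closures. -/
def LC {n : ℕ} (S : Set (Fin n → R)) : ℕ → Set (Fin n → R)
  | 0 => S
  | m + 1 => {v | ∃ (ℓ : ℕ) (w : Fin ℓ → Fin n → R) (lam : Fin ℓ → R),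
      (∀ i, w i ∈ LC S m) ∧ v = ∑ i, vsmul (w i) (lam i)}

end Nearfield

/-- Stirling numbers of the second kind. -/
def stirling2 : ℕ → ℕ → ℕ
  | 0, 0 => 1
  | 0, _ + 1 => 0
  | _ + 1, 0 => 0
  | n + 1, k + 1 => (k + 1) * stirling2 n (k + 1) + stirling2 n k

open Nearfield

section Aux

variable {R : Type*} [Nearfield R]

/-- `a * (-1) = -a`, from left distributivity and `a * 0 = 0`. -/
private lemma nf_mul_neg_one (a : R) : a * (-1) = -a := by
  have h : a * 1 + a * (-1) = 0 := by
    rw [← Nearfield.left_distrib, add_neg_cancel, Nearfield.mul_zero]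
  rw [Nearfield.mul_one] at h
  exact eq_neg_of_add_eq_zero_right h

/-- `a * (-b) = -(a * b)`. -/
private lemma nf_mul_neg (a b : R) : a * (-b) = -(a * b) := by
  have h : a * b + a * (-b) = 0 := by
    rw [← Nearfield.left_distrib, add_neg_cancel, Nearfield.mul_zero]
  exact eq_neg_of_add_eq_zero_right h

/-- `(-1) * c = -c` in a nearfield. -/
private lemma nf_neg_one_mul (c : R) : (-1 : R) * c = -c := by
  by_cases hv : c + (-1 : R) * c = 0
  · exact eq_neg_of_add_eq_zero_left (by rwa [add_comm] at hv)
  · -- v := c + (-1)*c is a fixed point of left multiplication by -1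
    set v : R := c + (-1 : R) * c with hvdef
    have hfix : (-1 : R) * v = v := by
      rw [hvdef, Nearfield.left_distrib, ← Nearfield.mul_assoc]
      have h11 : (-1 : R) * (-1) = 1 := by
        have := nf_mul_neg (-1 : R) 1
        rw [Nearfield.mul_one] at this
        rw [this]; exact neg_neg 1
      rw [h11, Nearfield.one_mul, add_comm]
    have h1 : (-1 : R) = 1 := by
      have := congrArg (fun t => t * v⁻¹) hfix
      rw [Nearfield.mul_assoc, Nearfield.mul_inv_cancel v hv,
        Nearfield.mul_one] at this
      rw [this, ← Nearfield.mul_inv_cancel v hv]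
    rw [h1, Nearfield.one_mul]
    have : c = -c := by
      have h2 : (1 : R) + 1 = 0 := by nth_rewrite 1 [← h1]; exact neg_add_cancel 1
      have : c * ((1 : R) + 1) = 0 := by rw [h2, Nearfield.mul_zero]
      rw [Nearfield.left_distrib, Nearfield.mul_one] at this
      exact eq_neg_of_add_eq_zero_right this
    exact this

/-- `(-a) * c = -(a * c)`. -/
private lemma nf_neg_mul (a c : R) : (-a) * c = -(a * c) := by
  have h1 : (-a : R) = a * (-1) := (nf_mul_neg_one a).symm
  rw [h1, Nearfield.mul_assoc, nf_neg_one_mul, nf_mul_neg]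

end Aux

/-- Right distributivity across sums equal to zero: if `α·x = -(β·y)` then
`(α·x + β·y)·γ = α·x·γ + β·y·γ`. -/
theorem right_distrib_of_sum_eq_zero {R : Type*} [Nearfield R]
    (α β γ x y : R) (h : α * x = -(β * y)) :
    (α * x + β * y) * γ = α * x * γ + β * y * γ := by
  rw [h, neg_add_cancel, Nearfield.zero_mul, nf_neg_mul, neg_add_cancel]
end

section
/- Let R be a nearfield and let T = ⊕_{i=1}^ℓ u_i R ⊆ R^n be the direct sum generated by nonzero vectors u_1,…,u_ℓ with mutually disjoint supports. Then there exists a set D of simple vectors (weight 1 or 2) in R^n such that T = D^⊥ = { x : ⟨e,x⟩ = 0 for all e ∈ D }. -/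
open scoped BigOperators

open Nearfield

namespace NFAux

variable {R : Type*} [Nearfield R]

lemma mul_neg' (a x : R) : a * (-x) = -(a * x) :=
  eq_neg_of_add_eq_zero_left (by
    rw [← Nearfield.left_distrib, neg_add_cancel, Nearfield.mul_zero])

lemma mul_neg_one' (x : R) : x * (-1) = -x := by
  have h : x * (-1) + x * 1 = 0 := by
    rw [← Nearfield.left_distrib, neg_add_cancel, Nearfield.mul_zero]
  rw [Nearfield.mul_one] at h
  exact eq_neg_of_add_eq_zero_left h

lemma neg_one_mul' (x : R) : (-1 : R) * x = -x := by
  have h11 : (-1 : R) * (-1) = 1 := by rw [mul_neg_one']; exact neg_neg 1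
  have hm : (-1 : R) * ((-1 : R) * x + x) = (-1 : R) * x + x := by
    rw [Nearfield.left_distrib, ← Nearfield.mul_assoc, h11, Nearfield.one_mul, add_comm]
  by_cases h0 : (-1 : R) * x + x = 0
  · exact eq_neg_of_add_eq_zero_left h0
  · exfalso
    apply h0
    have h1 : (-1 : R) = 1 := by
      have h2 := congrArg (fun y => y * ((-1 : R) * x + x)⁻¹) hm
      rwa [Nearfield.mul_assoc, Nearfield.mul_inv_cancel _ h0, Nearfield.mul_one] at h2
    have h2 : (1 : R) + 1 = 0 := by
      calc (1 : R) + 1 = -1 + 1 := by rw [h1]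
        _ = 0 := neg_add_cancel 1
    calc (-1 : R) * x + x = x + x := by rw [h1, Nearfield.one_mul]
      _ = x * 1 + x * 1 := by rw [Nearfield.mul_one]
      _ = x * (1 + 1) := (Nearfield.left_distrib x 1 1).symm
      _ = 0 := by rw [h2, Nearfield.mul_zero]

lemma neg_mul' (a x : R) : (-a) * x = -(a * x) := by
  rw [show (-a : R) = a * (-1) from (mul_neg_one' a).symm, Nearfield.mul_assoc,
    neg_one_mul', mul_neg']

lemma mul_ne_zero' {a b : R} (ha : a ≠ 0) (hb : b ≠ 0) : a * b ≠ 0 := by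
  intro h
  apply hb
  have h2 := congrArg (fun y => a⁻¹ * y) h
  rwa [← Nearfield.mul_assoc, Nearfield.inv_mul_cancel _ ha, Nearfield.one_mul,
    Nearfield.mul_zero] at h2

lemma inv_ne_zero' {a : R} (ha : a ≠ 0) : a⁻¹ ≠ 0 := by
  intro h
  have h2 := Nearfield.mul_inv_cancel a ha
  rw [h, Nearfield.mul_zero] at h2
  exact Nearfield.one_ne_zero h2.symm

lemma dot_single {n : ℕ} (j : Fin n) (x : Fin n → R) :
    dot (fun m => if m = j then (1 : R) else 0) x = x j := by
  unfold dot
  rw [Finset.sum_eq_single j]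
  · show (if j = j then (1 : R) else 0) * x j = x j
    rw [if_pos rfl, Nearfield.one_mul]
  · intro b _ hb
    show (if b = j then (1 : R) else 0) * x b = 0
    rw [if_neg hb, Nearfield.zero_mul]
  · intro h; exact absurd (Finset.mem_univ j) h

lemma dot_pair {n : ℕ} {p j : Fin n} (hpj : j ≠ p) (c : R) (x : Fin n → R) :
    dot (fun m => if m = j then (1 : R) else if m = p then c else 0) x
      = x j + c * x p := by
  classical
  unfold dot
  have h : ∑ m, (if m = j then (1 : R) else if m = p then c else 0) * x m
      = ∑ m ∈ ({j, p} : Finset (Fin n)),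
          (if m = j then (1 : R) else if m = p then c else 0) * x m := by
    refine (Finset.sum_subset (Finset.subset_univ _) ?_).symm
    intro m _ hm
    simp only [Finset.mem_insert, Finset.mem_singleton, not_or] at hm
    show (if m = j then (1 : R) else if m = p then c else 0) * x m = 0
    rw [if_neg hm.1, if_neg hm.2, Nearfield.zero_mul]
  rw [h, Finset.sum_pair hpj]
  show (if j = j then (1 : R) else if j = p then c else 0) * x j +
      (if p = j then (1 : R) else if p = p then c else 0) * x p = _
  rw [if_pos rfl, if_neg (Ne.symm hpj), if_pos rfl, Nearfield.one_mul]

lemma weight_single {n : ℕ} (j : Fin n) :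
    weight (fun m => if m = j then (1 : R) else 0) = 1 := by
  have hs : supp (fun m => if m = j then (1 : R) else 0) = {j} := by
    ext m
    simp only [supp, Set.mem_setOf_eq, Set.mem_singleton_iff]
    constructor
    · intro h; by_contra hm; exact h (if_neg hm)
    · intro h; subst h; rw [if_pos rfl]; exact Nearfield.one_ne_zero
  rw [weight, hs, Set.ncard_singleton]

lemma weight_pair {n : ℕ} {p j : Fin n} (hpj : j ≠ p) {c : R} (hc : c ≠ 0) :
    weight (fun m => if m = j then (1 : R) else if m = p then c else 0) = 2 := by
  have hs : supp (fun m => if m = j then (1 : R) else if m = p then c else 0)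
      = {j, p} := by
    ext m
    simp only [supp, Set.mem_setOf_eq, Set.mem_insert_iff, Set.mem_singleton_iff]
    constructor
    · intro h
      by_contra hm
      push_neg at hm
      rw [if_neg hm.1, if_neg hm.2] at h
      exact h rfl
    · rintro (rfl | rfl)
      · rw [if_pos rfl]; exact Nearfield.one_ne_zero
      · rw [if_neg (Ne.symm hpj), if_pos rfl]; exact hc
  rw [weight, hs, Set.ncard_pair hpj]

end NFAux

/-- Every direct sum of nonzero vectors with mutually disjoint supports is the
orthogonal set of some set of simple vectors. -/
theorem dirSum_eq_perp_simple {R : Type*} [Nearfield R] {n ℓ : ℕ}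
    (u : Fin ℓ → Fin n → R) (hne : ∀ i, u i ≠ 0)
    (hdisj : ∀ i j, i ≠ j → supp (u i) ∩ supp (u j) = ∅) :
    ∃ D : Set (Fin n → R), (∀ e ∈ D, IsSimple e) ∧ dirSum u = perp D := by
  classical
  have hex : ∀ i, ∃ k, u i k ≠ 0 := by
    intro i
    by_contra h
    push_neg at h
    exact hne i (funext fun k => h k)
  choose p hp using hex
  have huniq : ∀ {i i' : Fin ℓ} {k : Fin n}, u i k ≠ 0 → u i' k ≠ 0 → i = i' := by
    intro i i' k h h'
    by_contra hii
    have hk : k ∈ supp (u i) ∩ supp (u i') := ⟨h, h'⟩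
    rw [hdisj i i' hii] at hk
    exact hk
  have hval : ∀ (r : Fin ℓ → R) (i0 : Fin ℓ) (k : Fin n), u i0 k ≠ 0 →
      (∑ i, vsmul (u i) (r i)) k = u i0 k * r i0 := by
    intro r i0 k hk
    rw [Finset.sum_apply]
    apply Finset.sum_eq_single i0
    · intro b _ hb
      have hb0 : u b k = 0 := by
        by_contra hbb
        exact hb (huniq hbb hk)
      show u b k * r b = 0
      rw [hb0, Nearfield.zero_mul]
    · intro h; exact absurd (Finset.mem_univ i0) h
  have hzero : ∀ (r : Fin ℓ → R) (k : Fin n), (∀ i, u i k = 0) →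
      (∑ i, vsmul (u i) (r i)) k = 0 := by
    intro r k hk
    rw [Finset.sum_apply]
    apply Finset.sum_eq_zero
    intro i _
    show u i k * r i = 0
    rw [hk i, Nearfield.zero_mul]
  refine ⟨{e | (∃ j : Fin n, (∀ i, u i j = 0) ∧
        e = fun m => if m = j then (1 : R) else 0) ∨
      (∃ i : Fin ℓ, ∃ j : Fin n, u i j ≠ 0 ∧ j ≠ p i ∧
        e = fun m => if m = j then (1 : R) else
          if m = p i then -(u i j * (u i (p i))⁻¹) else 0)}, ?_, ?_⟩
  · rintro e (⟨j, -, rfl⟩ | ⟨i, j, hj, hjp, rfl⟩)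
    · exact Or.inl (NFAux.weight_single j)
    · exact Or.inr (NFAux.weight_pair hjp
        (neg_ne_zero.mpr (NFAux.mul_ne_zero' hj (NFAux.inv_ne_zero' (hp i)))))
  · ext x
    constructor
    · rintro ⟨r, rfl⟩
      rintro e (⟨j, hj0, rfl⟩ | ⟨i, j, hj, hjp, rfl⟩)
      · rw [NFAux.dot_single]
        exact hzero r j hj0
      · rw [NFAux.dot_pair hjp, hval r i j hj, hval r i (p i) (hp i), NFAux.neg_mul']
        have key : u i j * (u i (p i))⁻¹ * (u i (p i) * r i) = u i j * r i := by
          rw [Nearfield.mul_assoc, ← Nearfield.mul_assoc ((u i (p i))⁻¹),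
            Nearfield.inv_mul_cancel _ (hp i), Nearfield.one_mul]
        rw [key]
        exact add_neg_cancel _
    · intro hx
      refine ⟨fun i => (u i (p i))⁻¹ * x (p i), ?_⟩
      funext k
      by_cases hk : ∃ i0, u i0 k ≠ 0
      · obtain ⟨i0, hi0⟩ := hk
        rw [hval _ i0 k hi0]
        by_cases hkp : k = p i0
        · subst hkp
          rw [← Nearfield.mul_assoc, Nearfield.mul_inv_cancel _ (hp i0),
            Nearfield.one_mul]
        · have hmem : (fun m => if m = k then (1 : R) else
              if m = p i0 then -(u i0 k * (u i0 (p i0))⁻¹) else 0) ∈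
              ({e | (∃ j : Fin n, (∀ i, u i j = 0) ∧
                  e = fun m => if m = j then (1 : R) else 0) ∨
                (∃ i : Fin ℓ, ∃ j : Fin n, u i j ≠ 0 ∧ j ≠ p i ∧
                  e = fun m => if m = j then (1 : R) else
                    if m = p i then -(u i j * (u i (p i))⁻¹) else 0)} :
                Set (Fin n → R)) :=
            Or.inr ⟨i0, k, hi0, hkp, rfl⟩
          have h0 := hx _ hmem
          rw [NFAux.dot_pair hkp, NFAux.neg_mul', ← sub_eq_add_neg] at h0
          have hxk : x k = u i0 k * (u i0 (p i0))⁻¹ * x (p i0) := sub_eq_zero.mp h0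
          rw [hxk, Nearfield.mul_assoc]
      · push_neg at hk
        have hmem : (fun m => if m = k then (1 : R) else 0) ∈
            ({e | (∃ j : Fin n, (∀ i, u i j = 0) ∧
                e = fun m => if m = j then (1 : R) else 0) ∨
              (∃ i : Fin ℓ, ∃ j : Fin n, u i j ≠ 0 ∧ j ≠ p i ∧
                e = fun m => if m = j then (1 : R) else
                  if m = p i then -(u i j * (u i (p i))⁻¹) else 0)} :
              Set (Fin n → R)) :=
          Or.inl ⟨k, hk, rfl⟩
        have h0 := hx _ hmem
        rw [NFAux.dot_single] at h0
        rw [hzero _ k hk]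
        exact h0
end

section
/- Let R be a nearfield and let u_1,…,u_ℓ and u'_1,…,u'_ℓ be two sequences of nonzero vectors in R^n, each with mutually disjoint supports. Then ⊕_{i=1}^ℓ u_i R = ⊕_{i=1}^ℓ u'_i R if and only if there exist a permutation π of {1,…,ℓ} and nonzero scalars r_1,…,r_ℓ ∈ R such that u_i = u'_{π(i)}·r_i for every i. -/
open scoped BigOperators

open Nearfield

section Helpers

variable {R : Type*} [Nearfield R]

lemma nf_mul_ne_zero {a b : R} (ha : a ≠ 0) (hb : b ≠ 0) : a * b ≠ 0 := by
  intro h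
  apply hb
  have h2 : a⁻¹ * (a * b) = a⁻¹ * 0 := by rw [h]
  rwa [← Nearfield.mul_assoc, Nearfield.inv_mul_cancel a ha, Nearfield.one_mul,
    Nearfield.mul_zero] at h2

lemma nf_vsmul_apply {n : ℕ} (v : Fin n → R) (r : R) (k : Fin n) :
    vsmul v r k = v k * r := rfl

lemma nf_vsmul_one {n : ℕ} (v : Fin n → R) : vsmul v (1 : R) = v :=
  funext fun k => Nearfield.mul_one _

lemma nf_vsmul_vsmul {n : ℕ} (v : Fin n → R) (a b : R) :
    vsmul (vsmul v a) b = vsmul v (a * b) :=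
  funext fun _ => Nearfield.mul_assoc _ _ _

lemma nf_mem_dirSum_self {n ℓ : ℕ} (u : Fin ℓ → Fin n → R) (i : Fin ℓ) :
    u i ∈ dirSum u := by
  refine ⟨fun j => if j = i then 1 else 0, ?_⟩
  rw [Finset.sum_eq_single i]
  · show u i = vsmul (u i) (if i = i then 1 else 0)
    rw [if_pos rfl, nf_vsmul_one]
  · intro j _ hj
    show vsmul (u j) (if j = i then 1 else 0) = 0
    rw [if_neg hj]
    exact funext fun k => Nearfield.mul_zero _
  · exact fun h => absurd (Finset.mem_univ _) h

/-- If a coefficient is nonzero, the support of the corresponding generator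
is contained in the support of the sum (supports being disjoint). -/
lemma nf_supp_subset {n ℓ : ℕ} {b : Fin ℓ → Fin n → R}
    (hdisj : ∀ i j, i ≠ j → supp (b i) ∩ supp (b j) = ∅)
    (t : Fin ℓ → R) {j0 : Fin ℓ} (ht : t j0 ≠ 0) :
    supp (b j0) ⊆ supp (∑ j, vsmul (b j) (t j)) := by
  intro k hk
  have hk' : b j0 k ≠ 0 := hk
  have hcoord : (∑ j, vsmul (b j) (t j)) k = b j0 k * t j0 := by
    rw [Finset.sum_apply]
    refine Finset.sum_eq_single j0 (fun j _ hj => ?_) (fun h => absurd (Finset.mem_univ _) h)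
    have hz : b j k = 0 := by
      by_contra hb
      have hmem : k ∈ supp (b j) ∩ supp (b j0) := ⟨hb, hk'⟩
      rw [hdisj j j0 hj] at hmem
      exact hmem
    rw [nf_vsmul_apply, hz, Nearfield.zero_mul]
  show (∑ j, vsmul (b j) (t j)) k ≠ 0
  rw [hcoord]
  exact nf_mul_ne_zero hk' ht

/-- Every point in the support of a sum lies in the support of a generator
with nonzero coefficient. -/
lemma nf_exists_supp {n ℓ : ℕ} (b : Fin ℓ → Fin n → R) (t : Fin ℓ → R)
    {k : Fin n} (hk : (∑ j, vsmul (b j) (t j)) k ≠ 0) :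
    ∃ j, b j k ≠ 0 ∧ t j ≠ 0 := by
  rw [Finset.sum_apply] at hk
  obtain ⟨j, _, hj⟩ := Finset.exists_ne_zero_of_sum_ne_zero hk
  refine ⟨j, fun h => hj ?_, fun h => hj ?_⟩
  · rw [nf_vsmul_apply, h, Nearfield.zero_mul]
  · rw [nf_vsmul_apply, h, Nearfield.mul_zero]

lemma nf_exists_ne {n : ℕ} {v : Fin n → R} (hv : v ≠ 0) : ∃ k, v k ≠ 0 := by
  by_contra h
  push_neg at h
  exact hv (funext fun k => h k)

end Helpers

/-- Two direct sums of nonzero disjoint-support vectors coincide iff the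
generating vectors agree up to a permutation and nonzero right scalars. -/
theorem dirSum_eq_iff {R : Type*} [Nearfield R] {n ℓ : ℕ}
    (u u' : Fin ℓ → Fin n → R)
    (hne : ∀ i, u i ≠ 0) (hne' : ∀ i, u' i ≠ 0)
    (hdisj : ∀ i j, i ≠ j → supp (u i) ∩ supp (u j) = ∅)
    (hdisj' : ∀ i j, i ≠ j → supp (u' i) ∩ supp (u' j) = ∅) :
    dirSum u = dirSum u' ↔
      ∃ (π : Equiv.Perm (Fin ℓ)) (r : Fin ℓ → R),
        (∀ i, r i ≠ 0) ∧ ∀ i, u i = vsmul (u' (π i)) (r i) := by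
  constructor
  · intro h
    -- express each u i in terms of u', and each u' j in terms of u
    have ht0 : ∀ i, ∃ t : Fin ℓ → R, u i = ∑ j, vsmul (u' j) (t j) := by
      intro i
      have hmem := nf_mem_dirSum_self u i
      rw [h] at hmem
      exact hmem
    have hs0 : ∀ j, ∃ s : Fin ℓ → R, u' j = ∑ i, vsmul (u i) (s i) := by
      intro j
      have hmem := nf_mem_dirSum_self u' j
      rw [← h] at hmem
      exact hmem
    choose t ht using ht0
    choose s hs using hs0
    -- step 1: nonzero coefficient gives support inclusion
    have hA : ∀ i j, t i j ≠ 0 → supp (u' j) ⊆ supp (u i) := by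
      intro i j htij
      rw [ht i]
      exact nf_supp_subset hdisj' (t i) htij
    have hA' : ∀ j i, s j i ≠ 0 → supp (u i) ⊆ supp (u' j) := by
      intro j i hsji
      rw [hs j]
      exact nf_supp_subset hdisj (s j) hsji
    -- step 2: nonzero t i j forces supp (u i) ⊆ supp (u' j) as well
    have hB : ∀ i j, t i j ≠ 0 → supp (u i) ⊆ supp (u' j) := by
      intro i j htij
      obtain ⟨k0, hk0⟩ := nf_exists_ne (hne' j)
      have hk0' : (∑ a, vsmul (u a) (s j a)) k0 ≠ 0 := by rw [← hs j]; exact hk0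
      obtain ⟨a, hak, hsa⟩ := nf_exists_supp u (s j) hk0'
      have hsub : supp (u a) ⊆ supp (u i) := (hA' j a hsa).trans (hA i j htij)
      have hai : a = i := by
        by_contra hne2
        obtain ⟨k1, hk1⟩ := nf_exists_ne (hne a)
        have hmem : k1 ∈ supp (u a) ∩ supp (u i) := ⟨hk1, hsub hk1⟩
        rw [hdisj a i hne2] at hmem
        exact hmem
      rw [← hai]
      exact hA' j a hsa
    -- choose for each i the (unique) j with nonzero coefficient
    have hJ0 : ∀ i, ∃ j, t i j ≠ 0 := by
      intro i
      obtain ⟨k, hk⟩ := nf_exists_ne (hne i)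
      have hk' : (∑ j, vsmul (u' j) (t i j)) k ≠ 0 := by rw [← ht i]; exact hk
      obtain ⟨j, _, hj⟩ := nf_exists_supp u' (t i) hk'
      exact ⟨j, hj⟩
    choose J hJ using hJ0
    -- uniqueness of the nonzero coefficient
    have huniq : ∀ i j, t i j ≠ 0 → j = J i := by
      intro i j htij
      by_contra hne2
      obtain ⟨k, hk⟩ := nf_exists_ne (hne i)
      have h1 : k ∈ supp (u' j) := hB i j htij hk
      have h2 : k ∈ supp (u' (J i)) := hB i (J i) (hJ i) hk
      have hmem : k ∈ supp (u' j) ∩ supp (u' (J i)) := ⟨h1, h2⟩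
      rw [hdisj' j (J i) hne2] at hmem
      exact hmem
    -- u i is a scalar multiple of u' (J i)
    have hui : ∀ i, u i = vsmul (u' (J i)) (t i (J i)) := by
      intro i
      funext k
      rw [ht i, Finset.sum_apply]
      refine Finset.sum_eq_single (J i) (fun j _ hj => ?_) (fun h => absurd (Finset.mem_univ _) h)
      have hz : t i j = 0 := by
        by_contra hb
        exact hj (huniq i j hb)
      rw [nf_vsmul_apply, hz, Nearfield.mul_zero]
    -- J is injective, hence bijective
    have hinj : Function.Injective J := by
      intro i1 i2 hJeq
      by_contra hne2
      obtain ⟨k, hk⟩ := nf_exists_ne (hne i1)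
      have h1 : k ∈ supp (u' (J i1)) := hB i1 (J i1) (hJ i1) hk
      have h2 : k ∈ supp (u i2) := by
        rw [hJeq] at h1
        exact hA i2 (J i2) (hJ i2) h1
      have hmem : k ∈ supp (u i1) ∩ supp (u i2) := ⟨hk, h2⟩
      rw [hdisj i1 i2 hne2] at hmem
      exact hmem
    refine ⟨Equiv.ofBijective J (Finite.injective_iff_bijective.mp hinj),
      fun i => t i (J i), hJ, fun i => hui i⟩
  · rintro ⟨π, r, hr, hu⟩
    have hu' : ∀ i, u' (π i) = vsmul (u i) (r i)⁻¹ := by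
      intro i
      rw [hu i, nf_vsmul_vsmul, Nearfield.mul_inv_cancel (r i) (hr i), nf_vsmul_one]
    ext v
    constructor
    · rintro ⟨c, hc⟩
      refine ⟨fun j => r (π.symm j) * c (π.symm j), ?_⟩
      rw [hc, ← Equiv.sum_comp π (fun j => vsmul (u' j) (r (π.symm j) * c (π.symm j)))]
      refine Finset.sum_congr rfl fun i _ => ?_
      rw [hu i, nf_vsmul_vsmul, Equiv.symm_apply_apply]
    · rintro ⟨d, hd⟩
      refine ⟨fun i => (r i)⁻¹ * d (π i), ?_⟩
      rw [hd, ← Equiv.sum_comp π (fun j => vsmul (u' j) (d j))]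
      refine Finset.sum_congr rfl fun i _ => ?_
      rw [hu' i, nf_vsmul_vsmul]
end

section
/- Let R be a finite proper nearfield and T an R-subgroup of R^n with dim(T) = ℓ ≥ 1. Then the seed number of T (the minimum size of a generating set) equals min{ k : (|R|^k − 1)/(|R| − 1) ≥ ℓ }. In particular, log_{|R|}(ℓ) ≤ seed(T) ≤ 2 + log_{|R|}(ℓ). -/
open scoped BigOperators

open Nearfield
namespace NFSeed

open Nearfield

variable {R : Type*} [Nearfield R]

/-! ### Basic nearfield algebra -/

lemma mulA (a b c : R) : a * b * c = a * (b * c) := Nearfield.mul_assoc a b c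

lemma mul_left_cancel0 {a b c : R} (ha : a ≠ 0) (h : a * b = a * c) : b = c := by
  have h2 : a⁻¹ * (a * b) = a⁻¹ * (a * c) := by rw [h]
  rwa [← mulA, ← mulA, Nearfield.inv_mul_cancel a ha, Nearfield.one_mul,
    Nearfield.one_mul] at h2

lemma nf_mul_neg (a b : R) : a * (-b) = -(a * b) := by
  have h : a * (-b) + a * b = 0 := by
    rw [← Nearfield.left_distrib, neg_add_cancel, Nearfield.mul_zero]
  exact eq_neg_of_add_eq_zero_left h

lemma nf_inv_ne_zero {a : R} (ha : a ≠ 0) : a⁻¹ ≠ 0 := by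
  intro h
  exact Nearfield.one_ne_zero (by rw [← Nearfield.mul_inv_cancel a ha, h, Nearfield.mul_zero])

lemma nf_mul_ne_zero {a b : R} (ha : a ≠ 0) (hb : b ≠ 0) : a * b ≠ 0 := by
  intro h
  apply hb
  have := mul_left_cancel0 ha (h.trans (Nearfield.mul_zero a).symm)
  exact this

/-! ### R-subgroups and `gen` -/

lemma subset_gen {n : ℕ} (S : Set (Fin n → R)) : S ⊆ gen S := by
  intro x hx
  exact fun H hH => hH.2 hx

lemma gen_subset {n : ℕ} {S H : Set (Fin n → R)} (hH : IsRSubgroup H) (hSH : S ⊆ H) :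
    gen S ⊆ H :=
  Set.sInter_subset_of_mem ⟨hH, hSH⟩

lemma isRSubgroup_gen {n : ℕ} (S : Set (Fin n → R)) : IsRSubgroup (gen S) := by
  refine ⟨?_, ?_, ?_, ?_⟩
  · exact fun H hH => hH.1.1
  · exact fun x hx y hy H hH => hH.1.2.1 x (hx H hH) y (hy H hH)
  · exact fun x hx H hH => hH.1.2.2.1 x (hx H hH)
  · exact fun x hx r H hH => hH.1.2.2.2 x (hx H hH) r

lemma rsub_sub_mem {n : ℕ} {M : Set (Fin n → R)} (hM : IsRSubgroup M)
    {x y : Fin n → R} (hx : x ∈ M) (hy : y ∈ M) : x - y ∈ M := by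
  rw [sub_eq_add_neg]
  exact hM.2.1 x hx (-y) (hM.2.2.1 y hy)

lemma rsub_sum_mem {n : ℕ} {M : Set (Fin n → R)} (hM : IsRSubgroup M)
    {ι : Type*} (s : Finset ι) (f : ι → Fin n → R) (h : ∀ i ∈ s, f i ∈ M) :
    ∑ i ∈ s, f i ∈ M := by
  classical
  induction s using Finset.induction_on with
  | empty => simpa using hM.1
  | insert _ _ hnot ih =>
      rw [Finset.sum_insert hnot]
      exact hM.2.1 _ (h _ (Finset.mem_insert_self _ _))
        _ (ih fun i hi => h i (Finset.mem_insert_of_mem hi))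

/-! ### Homomorphisms -/

def IsHom {m n : ℕ} (φ : (Fin m → R) → (Fin n → R)) : Prop :=
  (∀ x y, φ (x + y) = φ x + φ y) ∧ (∀ x r, φ (vsmul x r) = vsmul (φ x) r)

lemma IsHom.map_zero {m n : ℕ} {φ : (Fin m → R) → (Fin n → R)} (hφ : IsHom φ) :
    φ 0 = 0 := by
  have h := hφ.1 0 0
  rw [add_zero] at h
  exact (add_eq_left.mp h.symm)

lemma IsHom.map_neg {m n : ℕ} {φ : (Fin m → R) → (Fin n → R)} (hφ : IsHom φ)
    (x : Fin m → R) : φ (-x) = -φ x := by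
  have h : φ x + φ (-x) = 0 := by rw [← hφ.1, add_neg_cancel, hφ.map_zero]
  exact eq_neg_of_add_eq_zero_right h

lemma IsHom.image_subgroup {m n : ℕ} {φ : (Fin m → R) → (Fin n → R)} (hφ : IsHom φ)
    {M : Set (Fin m → R)} (hM : IsRSubgroup M) : IsRSubgroup (φ '' M) := by
  refine ⟨⟨0, hM.1, hφ.map_zero⟩, ?_, ?_, ?_⟩
  · rintro _ ⟨x, hx, rfl⟩ _ ⟨y, hy, rfl⟩
    exact ⟨x + y, hM.2.1 x hx y hy, hφ.1 x y⟩
  · rintro _ ⟨x, hx, rfl⟩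
    exact ⟨-x, hM.2.2.1 x hx, hφ.map_neg x⟩
  · rintro _ ⟨x, hx, rfl⟩ r
    exact ⟨vsmul x r, hM.2.2.2 x hx r, hφ.2 x r⟩

lemma IsHom.preimage_subgroup {m n : ℕ} {φ : (Fin m → R) → (Fin n → R)} (hφ : IsHom φ)
    {H : Set (Fin n → R)} (hH : IsRSubgroup H) : IsRSubgroup (φ ⁻¹' H) := by
  refine ⟨?_, ?_, ?_, ?_⟩
  · simp only [Set.mem_preimage, hφ.map_zero]; exact hH.1
  · intro x hx y hy; simp only [Set.mem_preimage, hφ.1]; exact hH.2.1 _ hx _ hy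
  · intro x hx; simp only [Set.mem_preimage, hφ.map_neg]; exact hH.2.2.1 _ hx
  · intro x hx r; simp only [Set.mem_preimage, hφ.2]; exact hH.2.2.2 _ hx r

lemma IsHom.gen_image {m n : ℕ} {φ : (Fin m → R) → (Fin n → R)} (hφ : IsHom φ)
    (S : Set (Fin m → R)) : gen (φ '' S) = φ '' gen S := by
  apply Set.Subset.antisymm
  · exact gen_subset (hφ.image_subgroup (isRSubgroup_gen S))
      (Set.image_mono (f := φ) (subset_gen S))
  · rw [Set.image_subset_iff]
    exact gen_subset (hφ.preimage_subgroup (isRSubgroup_gen (φ '' S)))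
      (fun x hx => subset_gen _ (Set.mem_image_of_mem φ hx))

end NFSeed
namespace NFSeed

open Nearfield

variable {R : Type*} [Nearfield R]

lemma cancel_head {b x : R} (hb : b ≠ 0) : b * (b⁻¹ * x) = x := by
  rw [← mulA, Nearfield.mul_inv_cancel _ hb, Nearfield.one_mul]

theorem gen_rows_univ (hR : IsProper R) :
    ∀ (ℓ : ℕ) {k : ℕ} (C : Fin k → Fin ℓ → R),
      (∀ j, ∃ i, C i j ≠ 0) →
      (∀ j j' α, (∀ i, C i j' = α * C i j) → j' = j) →
      gen (Set.range C) = Set.univ := by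
  intro ℓ
  induction ℓ with
  | zero =>
      intro k C _ _
      apply Set.eq_univ_of_forall
      intro v
      have hv : v = 0 := funext fun j => j.elim0
      rw [hv]
      exact (isRSubgroup_gen _).1
  | succ ℓ ih =>
      intro k C hcol hprop
      have hM := isRSubgroup_gen (Set.range C)
      set M := gen (Set.range C) with hMdef
      set pi : (Fin (ℓ+1) → R) → (Fin ℓ → R) := fun x j => x j.castSucc with hpidef
      have hpi : IsHom pi := ⟨fun x y => rfl, fun x r => rfl⟩
      set C' : Fin k → Fin ℓ → R := fun i j => C i j.castSucc with hC'def
      have hC'univ : gen (Set.range C') = Set.univ := by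
        apply ih C'
        · exact fun j => hcol j.castSucc
        · intro j j' α h
          exact Fin.castSucc_injective ℓ (hprop j.castSucc j'.castSucc α h)
      have hpiM : pi '' M = Set.univ := by
        have h1 : pi '' Set.range C = Set.range C' := by
          rw [← Set.range_comp]; rfl
        rw [hMdef, ← hpi.gen_image, h1, hC'univ]
      have hsurj : ∀ y : Fin ℓ → R, ∃ m ∈ M, pi m = y := by
        intro y
        have hy : y ∈ pi '' M := by rw [hpiM]; trivial
        obtain ⟨m, hm, hmy⟩ := hy
        exact ⟨m, hm, hmy⟩
      by_cases hA : ∃ m ∈ M, (∀ j : Fin ℓ, m j.castSucc = 0) ∧ m (Fin.last ℓ) ≠ 0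
      · obtain ⟨m0, hm0M, hm0z, hm0l⟩ := hA
        set el := vsmul m0 ((m0 (Fin.last ℓ))⁻¹) with heldef
        have helM : el ∈ M := hM.2.2.2 m0 hm0M _
        have hellast : el (Fin.last ℓ) = 1 := Nearfield.mul_inv_cancel _ hm0l
        have helcs : ∀ j : Fin ℓ, el j.castSucc = 0 := by
          intro j
          show m0 j.castSucc * _ = 0
          rw [hm0z j, Nearfield.zero_mul]
        apply Set.eq_univ_of_forall
        intro x
        obtain ⟨y, hyM, hy⟩ := hsurj (pi x)
        have hmem : y + vsmul el (x (Fin.last ℓ) - y (Fin.last ℓ)) ∈ M :=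
          hM.2.1 y hyM _ (hM.2.2.2 el helM _)
        have hx : y + vsmul el (x (Fin.last ℓ) - y (Fin.last ℓ)) = x := by
          funext a
          refine Fin.lastCases ?_ ?_ a
          · show y _ + el (Fin.last ℓ) * _ = x _
            rw [hellast, Nearfield.one_mul, add_sub_cancel]
          · intro j
            show y j.castSucc + el j.castSucc * _ = x j.castSucc
            rw [helcs j, Nearfield.zero_mul, add_zero]
            exact congrFun hy j
        rwa [hx] at hmem
      · exfalso
        push_neg at hA
        classical
        set e : Fin ℓ → Fin ℓ → R := fun j a => if a = j then 1 else 0 with hedef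
        choose mm hmmM hmmpi using fun j => hsurj (e j)
        set β : Fin ℓ → R := fun j => mm j (Fin.last ℓ) with hβdef
        have hmmcs : ∀ j a : Fin ℓ, mm j a.castSucc = if a = j then (1:R) else 0 :=
          fun j a => congrFun (hmmpi j) a
        have key1 : ∀ m ∈ M, m (Fin.last ℓ) = ∑ j, β j * m j.castSucc := by
          intro m hm
          set y : Fin (ℓ+1) → R := ∑ j, vsmul (mm j) (m j.castSucc) with hydef
          have hyM : y ∈ M :=
            rsub_sum_mem hM Finset.univ _ fun j _ => hM.2.2.2 _ (hmmM j) _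
          have hycs : ∀ j' : Fin ℓ, y j'.castSucc = m j'.castSucc := by
            intro j'
            rw [hydef, Finset.sum_apply]
            rw [Finset.sum_eq_single j']
            · show mm j' j'.castSucc * m j'.castSucc = _
              rw [hmmcs j' j', if_pos rfl, Nearfield.one_mul]
            · intro b _ hb
              show mm b j'.castSucc * m b.castSucc = 0
              rw [hmmcs b j', if_neg (Ne.symm hb), Nearfield.zero_mul]
            · intro h; exact absurd (Finset.mem_univ j') h
          have hsub : (y - m) ∈ M := rsub_sub_mem hM hyM hm
          have hsubcs : ∀ j : Fin ℓ, (y - m) j.castSucc = 0 := by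
            intro j
            show y j.castSucc - m j.castSucc = 0
            rw [hycs j, sub_self]
          have hlast : y (Fin.last ℓ) - m (Fin.last ℓ) = 0 := hA (y - m) hsub hsubcs
          have hml : m (Fin.last ℓ) = y (Fin.last ℓ) := by
            have := sub_eq_zero.mp hlast
            exact this.symm
          rw [hml, hydef, Finset.sum_apply]
          rfl
        have key2 : ∀ j j' : Fin ℓ, j ≠ j' → β j ≠ 0 → β j' ≠ 0 → False := by
          intro j j' hjj' hbj hbj'
          obtain ⟨A0, B0, C0, hABC⟩ := hR
          set m : Fin (ℓ+1) → R :=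
            vsmul (mm j) ((β j)⁻¹ * A0) + vsmul (mm j') ((β j')⁻¹ * B0) with hmdef
          have hmM : m ∈ M :=
            hM.2.1 _ (hM.2.2.2 _ (hmmM j) _) _ (hM.2.2.2 _ (hmmM j') _)
          have hmlast : m (Fin.last ℓ) = A0 + B0 := by
            show β j * ((β j)⁻¹ * A0) + β j' * ((β j')⁻¹ * B0) = A0 + B0
            rw [cancel_head hbj, cancel_head hbj']
          have hmcs : ∀ t : Fin ℓ, m t.castSucc =
              (if t = j then (1:R) else 0) * ((β j)⁻¹ * A0)
              + (if t = j' then (1:R) else 0) * ((β j')⁻¹ * B0) := by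
            intro t
            show mm j t.castSucc * _ + mm j' t.castSucc * _ = _
            rw [hmmcs j t, hmmcs j' t]
          have hkey := key1 (vsmul m C0) (hM.2.2.2 _ hmM _)
          have hL : vsmul m C0 (Fin.last ℓ) = (A0 + B0) * C0 := by
            show m (Fin.last ℓ) * C0 = _
            rw [hmlast]
          have hRR : (∑ t, β t * vsmul m C0 t.castSucc) = A0 * C0 + B0 * C0 := by
            have hz : ∀ t ∈ Finset.univ, t ∉ ({j, j'} : Finset (Fin ℓ)) →
                β t * vsmul m C0 t.castSucc = 0 := by
              intro t _ ht
              simp only [Finset.mem_insert, Finset.mem_singleton, not_or] at ht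
              show β t * (m t.castSucc * C0) = 0
              rw [hmcs t, if_neg ht.1, if_neg ht.2, Nearfield.zero_mul,
                Nearfield.zero_mul, add_zero, Nearfield.zero_mul, Nearfield.mul_zero]
            rw [← Finset.sum_subset (Finset.subset_univ ({j, j'} : Finset (Fin ℓ))) hz]
            rw [Finset.sum_pair hjj']
            have h1 : β j * vsmul m C0 j.castSucc = A0 * C0 := by
              show β j * (m j.castSucc * C0) = A0 * C0
              rw [hmcs j, if_pos rfl, if_neg hjj', Nearfield.one_mul,
                Nearfield.zero_mul, add_zero, mulA, cancel_head hbj]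
            have h2 : β j' * vsmul m C0 j'.castSucc = B0 * C0 := by
              show β j' * (m j'.castSucc * C0) = B0 * C0
              rw [hmcs j', if_neg (Ne.symm hjj'), if_pos rfl, Nearfield.one_mul,
                Nearfield.zero_mul, zero_add, mulA, cancel_head hbj']
            rw [h1, h2]
          exact hABC (by rw [← hL, hkey, hRR])
        by_cases hz : ∀ j, β j = 0
        · obtain ⟨i, hi⟩ := hcol (Fin.last ℓ)
          apply hi
          rw [key1 (C i) (subset_gen _ ⟨i, rfl⟩)]
          apply Finset.sum_eq_zero
          intro j _
          rw [hz j, Nearfield.zero_mul]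
        · push_neg at hz
          obtain ⟨j0, hj0⟩ := hz
          have hcollast : ∀ i, C i (Fin.last ℓ) = β j0 * C i j0.castSucc := by
            intro i
            rw [key1 (C i) (subset_gen _ ⟨i, rfl⟩)]
            rw [Finset.sum_eq_single j0]
            · intro b _ hb
              have hb0 : β b = 0 := by
                by_contra hbne
                exact key2 b j0 hb hbne hj0
              rw [hb0, Nearfield.zero_mul]
            · intro h; exact absurd (Finset.mem_univ j0) h
          have heq := hprop j0.castSucc (Fin.last ℓ) (β j0) hcollast
          exact absurd heq (Fin.castSucc_lt_last j0).ne'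
end NFSeed
namespace NFSeed

open Nearfield

variable {R : Type*} [Nearfield R]

lemma cancel_head' {b x : R} (hb : b ≠ 0) : b⁻¹ * (b * x) = x := by
  rw [← mulA, Nearfield.inv_mul_cancel _ hb, Nearfield.one_mul]

section Phi

variable {n ℓ : ℕ} (u : Fin ℓ → Fin n → R)

/-- The canonical parametrization of `dirSum u`. -/
def phi (x : Fin ℓ → R) : Fin n → R := ∑ j, vsmul (u j) (x j)

lemma phi_apply (x : Fin ℓ → R) (i : Fin n) : phi u x i = ∑ j, u j i * x j := by
  rw [phi, Finset.sum_apply]; rfl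

lemma phi_range : Set.range (phi u) = dirSum u := by
  ext v
  constructor
  · rintro ⟨x, rfl⟩; exact ⟨x, rfl⟩
  · rintro ⟨r, rfl⟩; exact ⟨r, rfl⟩

lemma phi_basis (j' : Fin ℓ) :
    phi u (fun a => if a = j' then (1:R) else 0) = u j' := by
  classical
  funext i
  rw [phi_apply]
  rw [Finset.sum_eq_single j']
  · rw [if_pos rfl, Nearfield.mul_one]
  · intro b _ hb
    rw [if_neg hb, Nearfield.mul_zero]
  · intro h; exact absurd (Finset.mem_univ j') h

lemma disj_unique (hdisj : ∀ i j, i ≠ j → supp (u i) ∩ supp (u j) = ∅) {a b : Fin ℓ} {i : Fin n} (ha : u a i ≠ 0) (hb : u b i ≠ 0) :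
    a = b := by
  by_contra hab
  have hmem : i ∈ supp (u a) ∩ supp (u b) := ⟨ha, hb⟩
  rw [hdisj a b hab] at hmem
  exact hmem

lemma sum_collapse (hdisj : ∀ i j, i ≠ j → supp (u i) ∩ supp (u j) = ∅) {i : Fin n} {j : Fin ℓ} (hji : u j i ≠ 0) (g : Fin ℓ → R) :
    ∑ j', u j' i * g j' = u j i * g j := by
  rw [Finset.sum_eq_single j]
  · intro b _ hb
    have hb0 : u b i = 0 := by
      by_contra hbne
      exact hb (disj_unique u hdisj hbne hji)
    rw [hb0, Nearfield.zero_mul]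
  · intro h; exact absurd (Finset.mem_univ j) h

lemma phi_apply_of_ne (hdisj : ∀ i j, i ≠ j → supp (u i) ∩ supp (u j) = ∅) (x : Fin ℓ → R) {i : Fin n} {j : Fin ℓ} (hji : u j i ≠ 0) :
    phi u x i = u j i * x j := by
  rw [phi_apply]; exact sum_collapse u hdisj hji _

lemma phi_hom (hdisj : ∀ i j, i ≠ j → supp (u i) ∩ supp (u j) = ∅) : IsHom (phi u) := by
  constructor
  · intro x y
    funext i
    show phi u (x + y) i = phi u x i + phi u y i
    rw [phi_apply, phi_apply, phi_apply, ← Finset.sum_add_distrib]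
    apply Finset.sum_congr rfl
    intro j _
    show u j i * (x j + y j) = _
    rw [Nearfield.left_distrib]
  · intro x r
    funext i
    show phi u (vsmul x r) i = phi u x i * r
    rw [phi_apply, phi_apply]
    by_cases hex : ∃ j, u j i ≠ 0
    · obtain ⟨j, hj⟩ := hex
      rw [sum_collapse u hdisj hj, sum_collapse u hdisj hj]
      show u j i * (x j * r) = _
      rw [mulA]
    · push_neg at hex
      have h1 : ∑ j, u j i * vsmul x r j = 0 :=
        Finset.sum_eq_zero fun j _ => by rw [hex j, Nearfield.zero_mul]
      have h2 : ∑ j, u j i * x j = 0 :=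
        Finset.sum_eq_zero fun j _ => by rw [hex j, Nearfield.zero_mul]
      rw [h1, h2, Nearfield.zero_mul]

end Phi

/-- Lower bound: a generating set of size `k` forces `ℓ (q-1) ≤ q^k - 1`. -/
theorem card_bound_of_gen [Fintype R] {n ℓ : ℕ} (u : Fin ℓ → Fin n → R)
    (hne : ∀ i, u i ≠ 0)
    (hdisj : ∀ i j, i ≠ j → supp (u i) ∩ supp (u j) = ∅)
    {k : ℕ} (S : Finset (Fin n → R)) (hcard : S.card = k)
    (hgen : gen (↑S : Set (Fin n → R)) = dirSum u) :
    ℓ * (Fintype.card R - 1) ≤ Fintype.card R ^ k - 1 := by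
  classical
  -- a nonzero coordinate for each block
  have htex : ∀ j, ∃ i, u j i ≠ 0 := by
    intro j
    obtain ⟨i, hi⟩ := Function.ne_iff.mp (hne j)
    exact ⟨i, hi⟩
  choose t ht using htex
  -- enumerate S
  set E := S.equivFinOfCardEq hcard with hE
  set w : Fin k → (Fin n → R) := fun i => (E.symm i : Fin n → R) with hw
  have hwS : ∀ i, w i ∈ S := fun i => (E.symm i).2
  have hSw : ∀ v ∈ S, ∃ i, w i = v := by
    intro v hv
    refine ⟨E ⟨v, hv⟩, ?_⟩
    rw [hw]
    simp
  have hST : (↑S : Set (Fin n → R)) ⊆ dirSum u := by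
    rw [← hgen]; exact subset_gen _
  have hxw : ∀ i, ∃ x : Fin ℓ → R, phi u x = w i := by
    intro i
    have : w i ∈ Set.range (phi u) := by
      rw [phi_range]; exact hST (hwS i)
    exact this
  choose x hx using hxw
  have hujT : ∀ j, u j ∈ gen (↑S : Set (Fin n → R)) := by
    intro j
    rw [hgen, ← phi_range]
    exact ⟨_, phi_basis u j⟩
  -- columns are nonzero
  have hcolne : ∀ j : Fin ℓ, ∃ i, x i j ≠ 0 := by
    intro j
    by_contra hcon
    push_neg at hcon
    set H0 : Set (Fin n → R) := {v | v (t j) = 0} with hH0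
    have hH0sub : IsRSubgroup H0 := by
      refine ⟨rfl, ?_, ?_, ?_⟩
      · intro a ha b hb
        show a (t j) + b (t j) = 0
        rw [ha, hb, add_zero]
      · intro a ha
        show -(a (t j)) = 0
        rw [show a (t j) = 0 from ha, neg_zero]
      · intro a ha r
        show a (t j) * r = 0
        rw [show a (t j) = 0 from ha, Nearfield.zero_mul]
    have hS0 : (↑S : Set (Fin n → R)) ⊆ H0 := by
      intro v hv
      obtain ⟨i, rfl⟩ := hSw v hv
      show w i (t j) = 0
      rw [← hx i, phi_apply_of_ne u hdisj _ (ht j), hcon i, Nearfield.mul_zero]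
    have := gen_subset hH0sub hS0 (hujT j)
    exact ht j this
  -- columns are pairwise non-proportional
  have hcolprop : ∀ j j' : Fin ℓ, ∀ α : R, (∀ i, x i j' = α * x i j) → j' = j := by
    intro j j' α h
    by_contra hne'
    set β : R := u j' (t j') * (α * (u j (t j))⁻¹) with hβ
    set H : Set (Fin n → R) := {v | v (t j') = β * v (t j)} with hH
    have hHsub : IsRSubgroup H := by
      refine ⟨?_, ?_, ?_, ?_⟩
      · show (0:R) = β * 0
        rw [Nearfield.mul_zero]
      · intro a ha b hb
        show a (t j') + b (t j') = β * (a (t j) + b (t j))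
        rw [Nearfield.left_distrib, show a (t j') = β * a (t j) from ha,
          show b (t j') = β * b (t j) from hb]
      · intro a ha
        show -(a (t j')) = β * -(a (t j))
        rw [nf_mul_neg, show a (t j') = β * a (t j) from ha]
      · intro a ha r
        show a (t j') * r = β * (a (t j) * r)
        rw [show a (t j') = β * a (t j) from ha, mulA]
    have hSH : (↑S : Set (Fin n → R)) ⊆ H := by
      intro v hv
      obtain ⟨i, rfl⟩ := hSw v hv
      show w i (t j') = β * w i (t j)
      have hmain : β * (u j (t j) * x i j) = u j' (t j') * (α * x i j) := by
        rw [hβ, mulA, mulA, cancel_head' (ht j)]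
      rw [← hx i, phi_apply_of_ne u hdisj _ (ht j'), phi_apply_of_ne u hdisj _ (ht j),
        h i, hmain]
    have hmem := gen_subset hHsub hSH (hujT j')
    have huj'tj : u j' (t j) = 0 := by
      by_contra hcon
      exact hne' (disj_unique u hdisj hcon (ht j))
    have : u j' (t j') = β * u j' (t j) := hmem
    rw [huj'tj, Nearfield.mul_zero] at this
    exact ht j' this
  -- normalization of columns
  have hpiv : ∀ j : Fin ℓ, ∃ i, x i j ≠ 0 := hcolne
  choose i0 hi0 using hpiv
  set bb : Fin ℓ → R := fun j => x (i0 j) j with hbb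
  set ν : Fin ℓ → Fin k → R := fun j i => (bb j)⁻¹ * x i j with hν
  have hν1 : ∀ j, ν j (i0 j) = 1 := fun j => Nearfield.inv_mul_cancel _ (hi0 j)
  have hcolν : ∀ j i, x i j = bb j * ν j i := by
    intro j i
    show x i j = bb j * ((bb j)⁻¹ * x i j)
    rw [cancel_head (hi0 j)]
  -- the injection
  set Ψ : Fin ℓ × {b : R // b ≠ 0} → {v : Fin k → R // v ≠ 0} :=
    fun p => ⟨fun i => p.2.1 * ν p.1 i, by
      intro hzero
      have := congrFun hzero (i0 p.1)
      rw [hν1 p.1, Nearfield.mul_one] at this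
      exact p.2.2 this⟩ with hΨ
  have hΨinj : Function.Injective Ψ := by
    rintro ⟨j, b, hb⟩ ⟨j', b', hb'⟩ heq
    have heq' : ∀ i, b * ν j i = b' * ν j' i := by
      intro i
      exact congrFun (congrArg Subtype.val heq) i
    have hjj : j' = j := by
      apply hcolprop j j' (bb j' * ((b'⁻¹ * b) * (bb j)⁻¹))
      intro i
      have h1 : ν j' i = (b'⁻¹ * b) * ν j i := by
        rw [mulA, heq' i, cancel_head' hb']
      rw [hcolν j' i, h1]
      show bb j' * ((b'⁻¹ * b) * ((bb j)⁻¹ * x i j)) = _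
      rw [← mulA (b'⁻¹ * b) ((bb j)⁻¹) (x i j),
        ← mulA (bb j') ((b'⁻¹ * b) * (bb j)⁻¹) (x i j)]
    subst hjj
    have hb : b = b' := by
      have := heq' (i0 j')
      rwa [hν1 j', Nearfield.mul_one, Nearfield.mul_one] at this
    subst hb
    rfl
  have hcard1 : Nat.card (Fin ℓ × {b : R // b ≠ 0}) ≤ Nat.card {v : Fin k → R // v ≠ 0} :=
    Nat.card_le_card_of_injective Ψ hΨinj
  have hc2 : Nat.card {b : R // b ≠ 0} = Fintype.card R - 1 := by
    rw [Nat.card_eq_fintype_card, Fintype.card_subtype_compl, Fintype.card_subtype_eq]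
  have hc3 : Nat.card {v : Fin k → R // v ≠ 0} = Fintype.card R ^ k - 1 := by
    rw [Nat.card_eq_fintype_card, Fintype.card_subtype_compl, Fintype.card_subtype_eq,
      Fintype.card_fun, Fintype.card_fin]
  rw [Nat.card_prod, Nat.card_eq_fintype_card (α := Fin ℓ), Fintype.card_fin, hc2, hc3]
    at hcard1
  exact hcard1

end NFSeed
namespace NFSeed

open Nearfield

variable {R : Type*} [Nearfield R]

lemma cSet_eq_of_prop {k : ℕ} {w w' : Fin k → R} (hw : w ∈ cSet R k)
    (hw' : w' ∈ cSet R k) {γ : R} (h : ∀ i, w' i = γ * w i) : w' = w := by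
  obtain ⟨i0, h1, h0⟩ := hw
  obtain ⟨i1, h1', h0'⟩ := hw'
  rcases lt_trichotomy i1 i0 with hlt | heq | hgt
  · exfalso
    have := h i1
    rw [h1', h0 i1 hlt, Nearfield.mul_zero] at this
    exact Nearfield.one_ne_zero this
  · subst heq
    have hγ : γ = 1 := by
      have := h i1
      rw [h1', h1, Nearfield.mul_one] at this
      exact this.symm
    funext i
    rw [h i, hγ, Nearfield.one_mul]
  · exfalso
    have hγ : γ = 0 := by
      have := h i0
      rw [h0' i0 hgt, h1, Nearfield.mul_one] at this
      exact this.symm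
    have := h i1
    rw [h1', hγ, Nearfield.zero_mul] at this
    exact Nearfield.one_ne_zero this

lemma card_cSet [Fintype R] (k : ℕ) :
    Nat.card {w : Fin k → R // w ∈ cSet R k} * (Fintype.card R - 1) =
      Fintype.card R ^ k - 1 := by
  classical
  set Φ : {w : Fin k → R // w ∈ cSet R k} × {b : R // b ≠ 0} →
      {v : Fin k → R // v ≠ 0} := fun p => ⟨fun i => p.2.1 * p.1.1 i, by
    obtain ⟨i0, hp1, _⟩ := p.1.2
    intro hzero
    have := congrFun hzero i0
    rw [hp1, Nearfield.mul_one] at this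
    exact p.2.2 this⟩ with hΦ
  have hbij : Function.Bijective Φ := by
    constructor
    · rintro ⟨⟨w, hw⟩, ⟨b, hb⟩⟩ ⟨⟨w', hw'⟩, ⟨b', hb'⟩⟩ heq
      have heq' : ∀ i, b * w i = b' * w' i :=
        fun i => congrFun (congrArg Subtype.val heq) i
      have hww : w' = w := by
        apply cSet_eq_of_prop hw hw' (γ := b'⁻¹ * b)
        intro i
        rw [mulA, heq' i, cancel_head' hb']
      subst hww
      obtain ⟨i0, h1, _⟩ := hw
      have hbb : b = b' := by
        have := heq' i0
        rwa [h1, Nearfield.mul_one, Nearfield.mul_one] at this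
      subst hbb
      rfl
    · rintro ⟨v, hv⟩
      have hex : ∃ i, v i ≠ 0 := by
        obtain ⟨i, hi⟩ := Function.ne_iff.mp hv
        exact ⟨i, hi⟩
      haveI : DecidablePred (fun i : Fin k => v i ≠ 0) := Classical.decPred _
      set i0 := Fin.find (fun i : Fin k => v i ≠ 0) hex with hi0def
      have hi0 : v i0 ≠ 0 := Fin.find_spec hex
      have hmin : ∀ a : Fin k, a < i0 → v a = 0 := by
        intro a ha
        have := Fin.find_min hex ha
        simpa using this
      refine ⟨⟨⟨fun i => (v i0)⁻¹ * v i, ⟨i0, Nearfield.inv_mul_cancel _ hi0, ?_⟩⟩,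
        ⟨v i0, hi0⟩⟩, ?_⟩
      · intro a ha
        show (v i0)⁻¹ * v a = 0
        rw [hmin a ha, Nearfield.mul_zero]
      · apply Subtype.ext
        funext i
        show v i0 * ((v i0)⁻¹ * v i) = v i
        rw [cancel_head hi0]
  have hcards := Nat.card_eq_of_bijective Φ hbij
  rw [Nat.card_prod] at hcards
  have hc2 : Nat.card {b : R // b ≠ 0} = Fintype.card R - 1 := by
    rw [Nat.card_eq_fintype_card, Fintype.card_subtype_compl, Fintype.card_subtype_eq]
  have hc3 : Nat.card {v : Fin k → R // v ≠ 0} = Fintype.card R ^ k - 1 := by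
    rw [Nat.card_eq_fintype_card, Fintype.card_subtype_compl, Fintype.card_subtype_eq,
      Fintype.card_fun, Fintype.card_fin]
  rw [hc2, hc3] at hcards
  exact hcards

theorem exists_gen_of_card [Fintype R] (hR : IsProper R) {n ℓ : ℕ}
    (u : Fin ℓ → Fin n → R)
    (hdisj : ∀ i j, i ≠ j → supp (u i) ∩ supp (u j) = ∅) {k : ℕ}
    (hk : ℓ * (Fintype.card R - 1) ≤ Fintype.card R ^ k - 1) :
    ∃ S : Finset (Fin n → R), S.card ≤ k ∧ gen (↑S : Set (Fin n → R)) = dirSum u := by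
  classical
  haveI : Fintype {w : Fin k → R // w ∈ cSet R k} := Fintype.ofFinite _
  have hq2 : 1 < Fintype.card R :=
    Fintype.one_lt_card_iff_nontrivial.mpr ⟨⟨1, 0, Nearfield.one_ne_zero⟩⟩
  have hcnt := card_cSet (R := R) k
  have hle : ℓ ≤ Nat.card {w : Fin k → R // w ∈ cSet R k} := by
    have hpos : 0 < Fintype.card R - 1 := by omega
    apply Nat.le_of_mul_le_mul_right _ hpos
    rw [hcnt]
    exact hk
  rw [Nat.card_eq_fintype_card] at hle
  set g : Fin ℓ → {w : Fin k → R // w ∈ cSet R k} :=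
    fun j => (Fintype.equivFin _).symm (Fin.castLE hle j) with hg
  have hginj : Function.Injective g := by
    intro a b hab
    have h1 := (Fintype.equivFin {w : Fin k → R // w ∈ cSet R k}).symm.injective hab
    exact Fin.castLE_injective hle h1
  set Crow : Fin k → Fin ℓ → R := fun i j => (g j).1 i with hC
  have huniv : gen (Set.range Crow) = Set.univ := by
    apply gen_rows_univ hR
    · intro j
      obtain ⟨i0, h1, _⟩ := (g j).2
      refine ⟨i0, ?_⟩
      show (g j).1 i0 ≠ 0
      rw [h1]
      exact Nearfield.one_ne_zero
    · intro j j' α h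
      have hww : (g j').1 = (g j).1 := cSet_eq_of_prop (g j).2 (g j').2 h
      exact hginj (Subtype.ext hww)
  refine ⟨Finset.image (fun i => phi u (Crow i)) Finset.univ, ?_, ?_⟩
  · calc (Finset.image (fun i => phi u (Crow i)) Finset.univ).card
        ≤ Finset.univ.card := Finset.card_image_le
      _ = k := by rw [Finset.card_univ, Fintype.card_fin]
  · have hco : (↑(Finset.image (fun i => phi u (Crow i)) Finset.univ) :
        Set (Fin n → R)) = phi u '' Set.range Crow := by
      rw [Finset.coe_image, Finset.coe_univ, Set.image_univ, ← Set.range_comp]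
      rfl
    rw [hco, (phi_hom u hdisj).gen_image, huniv, Set.image_univ, phi_range]

end NFSeed
namespace NFSeed

lemma lin_le_pow {q : ℕ} (hq : 2 ≤ q) : ∀ m : ℕ, m * (q - 1) ≤ q ^ m - 1 := by
  intro m
  induction m with
  | zero => simp
  | succ m ih =>
      have hX : 1 ≤ q ^ m := Nat.one_le_pow _ _ (by omega)
      have hXq : q ^ (m + 1) = q ^ m * q := by rw [pow_succ]
      have hZ : q ^ m * (q - 1) + q ^ m = q ^ m * q := by
        rw [← Nat.mul_succ]
        congr 1
        omega
      have hZ2 : q - 1 ≤ q ^ m * (q - 1) := Nat.le_mul_of_pos_left _ (by omega)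
      have hsm : (m + 1) * (q - 1) = m * (q - 1) + (q - 1) := by ring
      omega

lemma pow_sub_le {q s : ℕ} (hq : 2 ≤ q) (hs : 3 ≤ s) :
    q ^ (s - 2) * (q - 1) ≤ q ^ (s - 1) - 1 := by
  have hX : 1 ≤ q ^ (s - 2) := Nat.one_le_pow _ _ (by omega)
  have hXq : q ^ (s - 1) = q ^ (s - 2) * q := by
    rw [← pow_succ]
    congr 1
    omega
  have hZ : q ^ (s - 2) * (q - 1) + q ^ (s - 2) = q ^ (s - 2) * q := by
    rw [← Nat.mul_succ]
    congr 1
    omega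
  omega

end NFSeed

open NFSeed in
theorem seed_eq' {R : Type*} [Nearfield R] [Fintype R]
    (hR : IsProper R) {n ℓ : ℕ} (hl : 1 ≤ ℓ)
    (T : Set (Fin n → R)) (u : Fin ℓ → Fin n → R)
    (hne : ∀ i, u i ≠ 0)
    (hdisj : ∀ i j, i ≠ j → supp (u i) ∩ supp (u j) = ∅)
    (hT : T = dirSum u) :
    seed T = sInf {k : ℕ | ℓ ≤ (Fintype.card R ^ k - 1) / (Fintype.card R - 1)} ∧
      Real.logb (Fintype.card R) ℓ ≤ (seed T : ℝ) ∧
      (seed T : ℝ) ≤ 2 + Real.logb (Fintype.card R) ℓ := by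
  classical
  have hq2 : 1 < Fintype.card R :=
    Fintype.one_lt_card_iff_nontrivial.mpr ⟨⟨1, 0, Nearfield.one_ne_zero⟩⟩
  set q := Fintype.card R with hq
  set A : Set ℕ := {k | ∃ S : Finset (Fin n → R), S.card = k ∧
    gen (↑S : Set (Fin n → R)) = T} with hA
  set B : Set ℕ := {k : ℕ | ℓ ≤ (q ^ k - 1) / (q - 1)} with hB
  have hseedA : seed T = sInf A := rfl
  have hBiff : ∀ k, k ∈ B ↔ ℓ * (q - 1) ≤ q ^ k - 1 := by
    intro k
    exact Nat.le_div_iff_mul_le (by omega)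
  have hAB : A ⊆ B := by
    rintro k ⟨S, hcS, hgS⟩
    refine (hBiff k).mpr ?_
    exact card_bound_of_gen u hne hdisj S hcS (by rw [← hT]; exact hgS)
  have hBneo : B.Nonempty := ⟨ℓ, (hBiff ℓ).mpr (lin_le_pow hq2 ℓ)⟩
  have hBinf : sInf B ∈ B := Nat.sInf_mem hBneo
  obtain ⟨S0, hS0card, hS0gen⟩ :=
    exists_gen_of_card hR u hdisj ((hBiff _).mp hBinf)
  have hS0A : S0.card ∈ A := ⟨S0, rfl, by rw [hT]; exact hS0gen⟩
  have hAne : A.Nonempty := ⟨S0.card, hS0A⟩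
  have h1 : sInf A ≤ sInf B := le_trans (Nat.sInf_le hS0A) hS0card
  have h2 : sInf B ≤ sInf A := Nat.sInf_le (hAB (Nat.sInf_mem hAne))
  have hmain : seed T = sInf B := by rw [hseedA]; omega
  refine ⟨hmain, ?_, ?_⟩
  · -- log lower bound
    rw [hmain]
    set s := sInf B with hs
    have hsB : ℓ * (q - 1) ≤ q ^ s - 1 := (hBiff s).mp hBinf
    have hlq : ℓ ≤ q ^ s := by
      have : ℓ * 1 ≤ ℓ * (q - 1) := Nat.mul_le_mul_left _ (by omega)
      omega
    have hcast : (ℓ : ℝ) ≤ (q : ℝ) ^ (s : ℕ) := by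
      exact_mod_cast hlq
    have hb1 : (1 : ℝ) < (q : ℝ) := by exact_mod_cast hq2
    have hx0 : (0 : ℝ) < (ℓ : ℝ) := by exact_mod_cast hl
    rw [Real.logb_le_iff_le_rpow hb1 hx0, Real.rpow_natCast]
    exact hcast
  · -- log upper bound
    rw [hmain]
    set s := sInf B with hs
    have hb1 : (1 : ℝ) < (q : ℝ) := by exact_mod_cast hq2
    have hlogb0 : 0 ≤ Real.logb q ℓ :=
      Real.logb_nonneg hb1 (by exact_mod_cast hl)
    by_cases hs2 : s ≤ 2
    · have : (s : ℝ) ≤ 2 := by exact_mod_cast hs2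
      linarith
    · have hs3 : 3 ≤ s := by omega
      have hnot : s - 1 ∉ B := Nat.notMem_of_lt_sInf (by omega)
      have hlt : q ^ (s - 1) - 1 < ℓ * (q - 1) := by
        by_contra hcon
        exact hnot ((hBiff (s - 1)).mpr (by omega))
      have hgeom := pow_sub_le hq2 hs3
      have hlt2 : q ^ (s - 2) * (q - 1) < ℓ * (q - 1) := by omega
      have hlt3 : q ^ (s - 2) < ℓ := lt_of_mul_lt_mul_right hlt2 (Nat.zero_le _)
      have hcast : (q : ℝ) ^ ((s : ℕ) - 2 : ℕ) ≤ (ℓ : ℝ) := by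
        exact_mod_cast hlt3.le
      have hlog : ((s : ℝ) - 2) ≤ Real.logb q ℓ := by
        rw [Real.le_logb_iff_rpow_le hb1 (by exact_mod_cast hl)]
        have hcs : ((s - 2 : ℕ) : ℝ) = (s : ℝ) - 2 := by
          push_cast [Nat.cast_sub (by omega : 2 ≤ s)]
          ring
        rw [← hcs, Real.rpow_natCast]
        exact hcast
      linarith

/-- The seed number of an `ℓ`-dimensional `R`-subgroup equals
`min{ k : (|R|^k − 1)/(|R| − 1) ≥ ℓ }`; in particular it is between
`log_{|R|} ℓ` and `2 + log_{|R|} ℓ`. -/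
theorem seed_eq {R : Type*} [Nearfield R] [Fintype R]
    (hR : IsProper R) {n ℓ : ℕ} (hl : 1 ≤ ℓ)
    (T : Set (Fin n → R)) (u : Fin ℓ → Fin n → R)
    (hne : ∀ i, u i ≠ 0)
    (hdisj : ∀ i j, i ≠ j → supp (u i) ∩ supp (u j) = ∅)
    (hT : T = dirSum u) :
    seed T = sInf {k : ℕ | ℓ ≤ (Fintype.card R ^ k - 1) / (Fintype.card R - 1)} ∧
      Real.logb (Fintype.card R) ℓ ≤ (seed T : ℝ) ∧
      (seed T : ℝ) ≤ 2 + Real.logb (Fintype.card R) ℓ := by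
  exact seed_eq' hR hl T u hne hdisj hT
end

section
/- Let R be an infinite proper nearfield. Then for every n ≥ 1 there exist two vectors v, w ∈ R^n such that gen(v,w) = R^n. -/
open scoped BigOperators

open Nearfield

namespace TwoGenAux

variable {R : Type*} [Nearfield R]

lemma m_assoc (a b c : R) : a * b * c = a * (b * c) := Nearfield.mul_assoc a b c
lemma m_add (a b c : R) : a * (b + c) = a * b + a * c := Nearfield.left_distrib a b c
lemma z_mul (a : R) : (0 : R) * a = 0 := Nearfield.zero_mul a
lemma mul_z (a : R) : a * (0 : R) = 0 := Nearfield.mul_zero a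
lemma o_mul (a : R) : (1 : R) * a = a := Nearfield.one_mul a
lemma mul_o (a : R) : a * (1 : R) = a := Nearfield.mul_one a

lemma m_neg (a b : R) : a * -b = -(a * b) := by
  have h : a * b + a * -b = 0 := by rw [← m_add, add_neg_cancel, mul_z]
  exact (neg_eq_of_add_eq_zero_right h).symm

lemma inv_nz {a : R} (ha : a ≠ 0) : a⁻¹ ≠ 0 := by
  intro h
  have h2 := Nearfield.mul_inv_cancel a ha
  rw [h, mul_z] at h2
  exact Nearfield.one_ne_zero h2.symm

lemma mul_nz {a b : R} (ha : a ≠ 0) (hb : b ≠ 0) : a * b ≠ 0 := by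
  intro h
  have h2 : a⁻¹ * (a * b) = 0 := by rw [h, mul_z]
  rw [← m_assoc, Nearfield.inv_mul_cancel a ha, o_mul] at h2
  exact hb h2

lemma mul_inv_cancel_left {a : R} (ha : a ≠ 0) (b : R) : a * (a⁻¹ * b) = b := by
  rw [← m_assoc, Nearfield.mul_inv_cancel a ha, o_mul]

lemma mul_left_cancel₀ {a x y : R} (ha : a ≠ 0) (h : a * x = a * y) : x = y := by
  have h2 : a⁻¹ * (a * x) = a⁻¹ * (a * y) := by rw [h]
  rwa [← m_assoc, ← m_assoc, Nearfield.inv_mul_cancel a ha, o_mul, o_mul] at h2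

/-- The inductive family of "expression functions" on a nearfield. -/
inductive Exp : (R → R) → Prop
  | one : Exp fun _ => 1
  | id : Exp fun s => s
  | add {f g : R → R} : Exp f → Exp g → Exp fun s => f s + g s
  | neg {f : R → R} : Exp f → Exp fun s => -f s
  | smul {f : R → R} (r : R) : Exp f → Exp fun s => f s * r

lemma exp_congr {f g : R → R} (h : ∀ s, f s = g s) (hf : Exp f) : Exp g :=
  (funext h : f = g) ▸ hf

lemma exp_const (c : R) : Exp (fun _ : R => c) :=
  exp_congr (fun _ => o_mul c) (Exp.smul c Exp.one)

lemma exp_comp {f g : R → R} (hf : Exp f) (hg : Exp g) : Exp fun s => f (g s) := by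
  induction hf with
  | one => exact Exp.one
  | id => exact hg
  | add h1 h2 ih1 ih2 => exact Exp.add ih1 ih2
  | neg h ih => exact Exp.neg ih
  | smul r h ih => exact Exp.smul r ih

lemma exp_sum {ι : Type*} (s : Finset ι) (g : ι → R → R) :
    (∀ i ∈ s, Exp (g i)) → Exp fun x => ∑ i ∈ s, g i x := by
  classical
  induction s using Finset.induction_on with
  | empty =>
    intro _
    exact exp_congr (fun x => (Finset.sum_empty).symm) (exp_const 0)
  | @insert a s ha ih =>
    intro h
    have h1 : Exp fun x => g a x + ∑ i ∈ s, g i x :=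
      Exp.add (h a (Finset.mem_insert_self a s))
        (ih fun i hi => h i (Finset.mem_insert_of_mem hi))
    exact exp_congr (fun x => (Finset.sum_insert ha).symm) h1

/-- Value-separation: if `α ≠ β` are both nonzero, some expression function
vanishing at `0` and at `β` is nonzero at `α`. -/
lemma sep2 (hR : IsProper R) {α β : R} (hα : α ≠ 0) (hβ : β ≠ 0) (hne : α ≠ β) :
    ∃ θ : R → R, Exp θ ∧ θ 0 = 0 ∧ θ β = 0 ∧ θ α ≠ 0 := by
  by_contra hcon
  push_neg at hcon
  set u := α * β⁻¹ with hu
  have hu0 : u ≠ 0 := mul_nz hα (inv_nz hβ)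
  have huβ : u * β = α := by
    rw [hu, m_assoc, Nearfield.inv_mul_cancel β hβ, mul_o]
  have key : ∀ ψ : R → R, Exp ψ → ψ 0 = 0 → ψ α = u * ψ β := by
    intro ψ hψ h0ψ
    have hθ : Exp fun s => ψ s + -(s * (β⁻¹ * ψ β)) :=
      Exp.add hψ (Exp.neg (Exp.smul (β⁻¹ * ψ β) Exp.id))
    have hθ0 : ψ 0 + -((0 : R) * (β⁻¹ * ψ β)) = 0 := by
      rw [h0ψ, z_mul, neg_zero, add_zero]
    have hθβ : ψ β + -(β * (β⁻¹ * ψ β)) = 0 := by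
      rw [mul_inv_cancel_left hβ]; exact add_neg_cancel _
    have h : ψ α + -(α * (β⁻¹ * ψ β)) = 0 := hcon _ hθ hθ0 hθβ
    have h2 : α * (β⁻¹ * ψ β) = u * ψ β := by rw [← m_assoc, ← hu]
    rw [h2] at h
    exact add_neg_eq_zero.mp h
  have keyN : ∀ x γ q : R,
      (u * x + γ) * q + -((u * x) * q) + -(γ * q)
        = u * ((x + γ) * q + -(x * q) + -(γ * q)) := by
    intro x γ q
    have hαr : α * (β⁻¹ * x) = u * x := by rw [← m_assoc, ← hu]
    have hβr : β * (β⁻¹ * x) = x := mul_inv_cancel_left hβ x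
    have hψ : Exp fun s => (s * (β⁻¹ * x) + γ) * q + -((s * (β⁻¹ * x)) * q) + -(γ * q) :=
      Exp.add
        (Exp.add (Exp.smul q (Exp.add (Exp.smul (β⁻¹ * x) Exp.id) (exp_const γ)))
          (Exp.neg (Exp.smul q (Exp.smul (β⁻¹ * x) Exp.id))))
        (Exp.neg (exp_const (γ * q)))
    have hψ0 : ((0 : R) * (β⁻¹ * x) + γ) * q + -(((0 : R) * (β⁻¹ * x)) * q) + -(γ * q) = 0 := by
      rw [z_mul, zero_add, z_mul, neg_zero, add_zero]
      exact add_neg_cancel _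
    have h : (α * (β⁻¹ * x) + γ) * q + -((α * (β⁻¹ * x)) * q) + -(γ * q)
        = u * ((β * (β⁻¹ * x) + γ) * q + -((β * (β⁻¹ * x)) * q) + -(γ * q)) :=
      key _ hψ hψ0
    rwa [hαr, hβr] at h
  obtain ⟨a, b, c, habc⟩ := hR
  set N₀ : R := (a + b) * c + -(a * c) + -(b * c) with hN
  have hN0 : N₀ ≠ 0 := by
    intro h
    apply habc
    have h4 : (a + b) * c - (a * c + b * c) = (a + b) * c + -(a * c) + -(b * c) := by abel
    have h5 : (a + b) * c - (a * c + b * c) = 0 := by rw [h4, ← hN, h]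
    exact sub_eq_zero.mp h5
  have step1 := keyN a (u * b) c
  have step2 := keyN b a c
  have e1 : (a + u * b) * c + -(a * c) + -((u * b) * c)
      = (u * b + a) * c + -((u * b) * c) + -(a * c) := by
    rw [add_comm a (u * b)]; abel
  have e2 : (b + a) * c + -(b * c) + -(a * c) = N₀ := by
    rw [add_comm b a, hN]; abel
  have hs1 : (u * a + u * b) * c + -((u * a) * c) + -((u * b) * c) = u * (u * N₀) := by
    rw [step1, e1, step2, e2]
  have hs3 : (u * a + u * b) * c + -((u * a) * c) + -((u * b) * c) = u * N₀ := by
    rw [← m_add u a b, m_assoc u (a + b) c, m_assoc u a c, m_assoc u b c, hN,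
      m_add u ((a + b) * c + -(a * c)) (-(b * c)), m_add u ((a + b) * c) (-(a * c)),
      m_neg, m_neg]
  have hc : u * (u * N₀) = u * N₀ := hs1.symm.trans hs3
  have h5 : u * N₀ = N₀ := mul_left_cancel₀ hu0 hc
  have h6 : u = 1 := by
    have h7 : (u * N₀) * N₀⁻¹ = N₀ * N₀⁻¹ := by rw [h5]
    rwa [m_assoc, Nearfield.mul_inv_cancel N₀ hN0, mul_o] at h7
  exact hne (by rw [← huβ, h6, o_mul])

/-- The diagonal lemma: if `f₀ t₀ = f₀ t' ≠ 0` and `t₀ ≠ t'`, there is an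
expression function vanishing wherever `f₀` does, taking distinct values
at `t₀` and `t'`. -/
lemma diag (hR : IsProper R) {f₀ : R → R} (hf : Exp f₀) {t₀ t' : R}
    (hne : t₀ ≠ t') (hv : f₀ t' = f₀ t₀) (h0 : f₀ t₀ ≠ 0) :
    ∃ g : R → R, Exp g ∧ (∀ s, f₀ s = 0 → g s = 0) ∧ g t₀ ≠ g t' := by
  by_contra hcon
  push_neg at hcon
  set k := t' + -t₀ with hk
  have hknz : k ≠ 0 := by
    intro h
    exact hne (add_neg_eq_zero.mp h).symm
  have P : ∀ z q : R, (z + k) * q = z * q + k * q := by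
    intro z q
    have hg : Exp fun s =>
        (f₀ s * ((f₀ t₀)⁻¹ * z) + (s * 1 + -(t₀ * 1))) * q + -((s * 1 + -(t₀ * 1)) * q) :=
      Exp.add
        (Exp.smul q (Exp.add (Exp.smul ((f₀ t₀)⁻¹ * z) hf)
          (Exp.add (Exp.smul 1 Exp.id) (exp_const (-(t₀ * 1))))))
        (Exp.neg (Exp.smul q (Exp.add (Exp.smul 1 Exp.id) (exp_const (-(t₀ * 1))))))
    have hzero : ∀ s, f₀ s = 0 →
        (f₀ s * ((f₀ t₀)⁻¹ * z) + (s * 1 + -(t₀ * 1))) * q + -((s * 1 + -(t₀ * 1)) * q) = 0 := by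
      intro s hs
      rw [hs, z_mul, zero_add, add_neg_cancel]
    have h : (f₀ t₀ * ((f₀ t₀)⁻¹ * z) + (t₀ * 1 + -(t₀ * 1))) * q + -((t₀ * 1 + -(t₀ * 1)) * q)
        = (f₀ t' * ((f₀ t₀)⁻¹ * z) + (t' * 1 + -(t₀ * 1))) * q + -((t' * 1 + -(t₀ * 1)) * q) :=
      hcon _ hg hzero
    rw [hv, mul_inv_cancel_left h0, add_neg_cancel (t₀ * 1), add_zero, z_mul, neg_zero,
      add_zero] at h
    have hk1 : t' * 1 + -(t₀ * 1) = k := by rw [mul_o, mul_o]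
    rw [hk1] at h
    rw [h]
    abel
  have P2 : ∀ m z q : R, (z + k * m) * q = z * q + (k * m) * q := by
    intro m z q
    by_cases hm : m = 0
    · rw [hm, mul_z, add_zero, z_mul, add_zero]
    · have h1 : (z * m⁻¹ + k) * m = z + k * m := by
        rw [P (z * m⁻¹) m, m_assoc, Nearfield.inv_mul_cancel m hm, mul_o]
      have h2 : (z * m⁻¹ + k) * (m * q) = z * q + k * (m * q) := by
        rw [P (z * m⁻¹) (m * q), m_assoc z m⁻¹ (m * q), ← m_assoc m⁻¹ m q,
          Nearfield.inv_mul_cancel m hm, o_mul]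
      calc (z + k * m) * q = ((z * m⁻¹ + k) * m) * q := by rw [h1]
        _ = (z * m⁻¹ + k) * (m * q) := m_assoc _ _ _
        _ = z * q + k * (m * q) := h2
        _ = z * q + (k * m) * q := by rw [m_assoc]
  obtain ⟨a, b, c, habc⟩ := hR
  apply habc
  have hb : k * (k⁻¹ * b) = b := mul_inv_cancel_left hknz b
  calc (a + b) * c = (a + k * (k⁻¹ * b)) * c := by rw [hb]
    _ = a * c + (k * (k⁻¹ * b)) * c := P2 (k⁻¹ * b) a c
    _ = a * c + b * c := by rw [hb]

/-- Separation: an expression function vanishing on a finite set and nonzero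
at a point outside it. -/
lemma sep (hR : IsProper R) (F : Finset R) :
    ∀ t₀ ∉ F, ∃ f : R → R, Exp f ∧ (∀ t ∈ F, f t = 0) ∧ f t₀ ≠ 0 := by
  classical
  induction F using Finset.induction_on with
  | empty =>
    intro t₀ _
    exact ⟨fun _ => 1, Exp.one, by simp, Nearfield.one_ne_zero⟩
  | @insert t' F ht' ih =>
    intro t₀ hmem
    have ht₀F : t₀ ∉ F := fun h => hmem (Finset.mem_insert_of_mem h)
    have ht₀t' : t₀ ≠ t' := fun h => hmem (h ▸ Finset.mem_insert_self t' F)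
    obtain ⟨f₀, hf₀, hz, hα⟩ := ih t₀ ht₀F
    by_cases hβ : f₀ t' = 0
    · refine ⟨f₀, hf₀, ?_, hα⟩
      intro t htm
      rcases Finset.mem_insert.mp htm with h | h
      · rw [h]; exact hβ
      · exact hz t h
    · by_cases hαβ : f₀ t₀ = f₀ t'
      · obtain ⟨g, hg, hgz, hgne⟩ := diag hR hf₀ ht₀t' hαβ.symm hα
        by_cases hb : g t' = 0
        · refine ⟨g, hg, ?_, ?_⟩
          · intro t htm
            rcases Finset.mem_insert.mp htm with h | h
            · rw [h]; exact hb
            · exact hgz t (hz t h)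
          · intro h; exact hgne (h.trans hb.symm)
        · by_cases ha : g t₀ = 0
          · refine ⟨fun s => g s * ((g t')⁻¹ * (-(f₀ t'))) + f₀ s,
              Exp.add (Exp.smul _ hg) hf₀, ?_, ?_⟩
            · intro t htm
              rcases Finset.mem_insert.mp htm with h | h
              · rw [h]
                show g t' * ((g t')⁻¹ * (-(f₀ t'))) + f₀ t' = 0
                rw [mul_inv_cancel_left hb, neg_add_cancel]
              · show g t * ((g t')⁻¹ * (-(f₀ t'))) + f₀ t = 0
                rw [hz t h, hgz t (hz t h), z_mul, add_zero]
            · show g t₀ * ((g t')⁻¹ * (-(f₀ t'))) + f₀ t₀ ≠ 0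
              rw [ha, z_mul, zero_add]; exact hα
          · obtain ⟨θ, hθ, hθ0, hθb, hθa⟩ := sep2 hR ha hb hgne
            refine ⟨fun s => θ (g s), exp_comp hθ hg, ?_, hθa⟩
            intro t htm
            rcases Finset.mem_insert.mp htm with h | h
            · rw [h]; exact hθb
            · show θ (g t) = 0
              rw [hgz t (hz t h)]; exact hθ0
      · obtain ⟨θ, hθ, hθ0, hθb, hθa⟩ := sep2 hR hα hβ hαβ
        refine ⟨fun s => θ (f₀ s), exp_comp hθ hf₀, ?_, hθa⟩
        intro t htm
        rcases Finset.mem_insert.mp htm with h | h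
        · rw [h]; exact hθb
        · show θ (f₀ t) = 0
          rw [hz t h]; exact hθ0

/-- Interpolation by expression functions at finitely many distinct points. -/
lemma interp (hR : IsProper R) {n : ℕ} (t : Fin n → R) (ht : Function.Injective t)
    (y : Fin n → R) : ∃ f : R → R, Exp f ∧ ∀ i, f (t i) = y i := by
  classical
  have hsep : ∀ i : Fin n, ∃ f : R → R, Exp f ∧
      (∀ s ∈ (Finset.univ.image t).erase (t i), f s = 0) ∧ f (t i) ≠ 0 :=
    fun i => sep hR _ (t i) (Finset.notMem_erase _ _)
  choose f hfE hfz hfnz using hsep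
  refine ⟨fun s => ∑ i : Fin n, f i s * ((f i (t i))⁻¹ * y i),
    exp_sum _ _ (fun i _ => Exp.smul _ (hfE i)), ?_⟩
  intro j
  show (∑ i : Fin n, f i (t j) * ((f i (t i))⁻¹ * y i)) = y j
  rw [Finset.sum_eq_single j]
  · exact mul_inv_cancel_left (hfnz j) (y j)
  · intro i _ hij
    have hzz : f i (t j) = 0 := by
      refine hfz i (t j) (Finset.mem_erase.mpr ⟨?_, Finset.mem_image_of_mem t (Finset.mem_univ j)⟩)
      intro h
      exact hij ((ht h).symm)
    show f i (t j) * ((f i (t i))⁻¹ * y i) = 0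
    rw [hzz, z_mul]
  · intro h
    exact absurd (Finset.mem_univ j) h

lemma mem_gen {n : ℕ} {S : Set (Fin n → R)} {x : Fin n → R} (hx : x ∈ S) : x ∈ gen S :=
  Set.mem_sInter.mpr fun _ hH => hH.2 hx

lemma gen_add {n : ℕ} {S : Set (Fin n → R)} {x y : Fin n → R}
    (hx : x ∈ gen S) (hy : y ∈ gen S) : x + y ∈ gen S :=
  Set.mem_sInter.mpr fun H hH =>
    hH.1.2.1 x (Set.mem_sInter.mp hx H hH) y (Set.mem_sInter.mp hy H hH)

lemma gen_neg {n : ℕ} {S : Set (Fin n → R)} {x : Fin n → R} (hx : x ∈ gen S) :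
    -x ∈ gen S :=
  Set.mem_sInter.mpr fun H hH => hH.1.2.2.1 x (Set.mem_sInter.mp hx H hH)

lemma gen_smul {n : ℕ} {S : Set (Fin n → R)} {x : Fin n → R} (hx : x ∈ gen S) (r : R) :
    vsmul x r ∈ gen S :=
  Set.mem_sInter.mpr fun H hH => hH.1.2.2.2 x (Set.mem_sInter.mp hx H hH) r

lemma exp_mem {n : ℕ} (t : Fin n → R) {f : R → R} (hf : Exp f) :
    (fun i => f (t i)) ∈ gen ({fun _ => 1, t} : Set (Fin n → R)) := by
  induction hf with
  | one => exact mem_gen (Set.mem_insert _ _)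
  | id => exact mem_gen (Set.mem_insert_of_mem _ rfl)
  | add h1 h2 ih1 ih2 => exact gen_add ih1 ih2
  | neg h ih => exact gen_neg ih
  | smul r h ih => exact gen_smul ih r

end TwoGenAux

/-- Over an infinite proper nearfield, every `R^n` is generated by two vectors. -/
theorem exists_two_generators {R : Type*} [Nearfield R] [Infinite R]
    (hR : IsProper R) (n : ℕ) (hn : 1 ≤ n) :
    ∃ v w : Fin n → R, gen ({v, w} : Set (Fin n → R)) = Set.univ := by
  classical
  set t : Fin n → R := fun i => Infinite.natEmbedding R i.val with htdef
  have ht : Function.Injective t := by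
    intro i j h
    exact Fin.val_injective ((Infinite.natEmbedding R).injective h)
  refine ⟨fun _ => 1, t, Set.eq_univ_of_forall fun y => ?_⟩
  obtain ⟨f, hfE, hfy⟩ := TwoGenAux.interp hR t ht y
  have hmem := TwoGenAux.exp_mem t hfE
  have he : (fun i => f (t i)) = y := funext hfy
  rwa [he] at hmem
end

section
/- Let R be a finite proper nearfield with |R| = q. The number of R-subgroups of R^n of dimension ℓ equals Σ_{d=0}^{n−ℓ} C(n,d) · S(n−d, ℓ) · (q−1)^{n−d−ℓ}, where C denotes binomial coefficients and S denotes Stirling numbers of the second kind. -/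
open scoped BigOperators

open Nearfield

namespace Nearfield
variable {R : Type*} [Nearfield R]

attribute [local instance] Classical.propDecidable

lemma nf_mul_assoc (a b c : R) : a * b * c = a * (b * c) := Nearfield.mul_assoc a b c
lemma nf_zero_mul (a : R) : (0:R) * a = 0 := Nearfield.zero_mul a
lemma nf_mul_zero (a : R) : a * (0:R) = 0 := Nearfield.mul_zero a
lemma nf_one_mul (a : R) : (1:R) * a = a := Nearfield.one_mul a

lemma nf_mul_left_cancel {a b c : R} (ha : a ≠ 0) (h : a * b = a * c) : b = c := by
  have := congrArg (a⁻¹ * ·) h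
  simpa [← nf_mul_assoc, Nearfield.inv_mul_cancel a ha, nf_one_mul] using this

lemma nf_mul_ne_zero {a b : R} (ha : a ≠ 0) (hb : b ≠ 0) : a * b ≠ 0 := by
  intro h
  exact hb (nf_mul_left_cancel ha (by rw [h, nf_mul_zero]))

lemma nf_mul_right_cancel {a b c : R} (hc : c ≠ 0) (h : a * c = b * c) : a = b := by
  have := congrArg (· * c⁻¹) h
  simpa [nf_mul_assoc, Nearfield.mul_inv_cancel c hc, Nearfield.mul_one] using this


variable {n : ℕ}

lemma vsmul_apply (v : Fin n → R) (r : R) (i : Fin n) : vsmul v r i = v i * r := rfl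

lemma vsmul_zero (v : Fin n → R) : vsmul v (0:R) = 0 := funext fun i => nf_mul_zero _

lemma zero_vsmul (r : R) : vsmul (0 : Fin n → R) r = 0 := funext fun i => nf_zero_mul _

lemma vsmul_one (v : Fin n → R) : vsmul v (1:R) = v := funext fun i => Nearfield.mul_one _

lemma vsmul_vsmul (v : Fin n → R) (a b : R) : vsmul (vsmul v a) b = vsmul v (a*b) :=
  funext fun i => nf_mul_assoc _ _ _

lemma mem_supp {v : Fin n → R} {i : Fin n} : i ∈ supp v ↔ v i ≠ 0 := Iff.rfl

lemma supp_vsmul {v : Fin n → R} {r : R} (hr : r ≠ 0) : supp (vsmul v r) = supp v := by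
  ext i
  simp only [mem_supp, vsmul_apply]
  constructor
  · intro h hv; exact h (by rw [hv, nf_zero_mul])
  · intro h; exact nf_mul_ne_zero h hr

lemma vsmul_ne_zero {v : Fin n → R} {r : R} (hv : v ≠ 0) (hr : r ≠ 0) : vsmul v r ≠ 0 := by
  intro h
  obtain ⟨i, hi⟩ : ∃ i, v i ≠ 0 := by
    by_contra hc; push_neg at hc; exact hv (funext hc)
  exact nf_mul_ne_zero hi hr (congrFun h i)

lemma exists_mem_supp {v : Fin n → R} (hv : v ≠ 0) : ∃ i, v i ≠ 0 := by
  by_contra hc; push_neg at hc; exact hv (funext hc)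

lemma mem_dirSum_iff {ℓ : ℕ} {u : Fin ℓ → Fin n → R} {v : Fin n → R} :
    v ∈ dirSum u ↔ ∃ r : Fin ℓ → R, ∀ j, v j = ∑ i, u i j * r i := by
  constructor
  · rintro ⟨r, rfl⟩; exact ⟨r, fun j => by simp [vsmul_apply]⟩
  · rintro ⟨r, h⟩; exact ⟨r, funext fun j => by simpa [vsmul_apply] using h j⟩

/-- Disjoint-supports hypothesis, pointwise form. -/
lemma disj_apply {ℓ : ℕ} {u : Fin ℓ → Fin n → R}
    (hd : ∀ i j, i ≠ j → supp (u i) ∩ supp (u j) = ∅)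
    {i j : Fin ℓ} (hij : i ≠ j) {k : Fin n} (hk : u i k ≠ 0) : u j k = 0 := by
  by_contra h
  have : k ∈ supp (u i) ∩ supp (u j) := ⟨hk, h⟩
  rw [hd i j hij] at this
  exact this

lemma sum_collapse {ℓ : ℕ} {u : Fin ℓ → Fin n → R}
    (hd : ∀ i j, i ≠ j → supp (u i) ∩ supp (u j) = ∅)
    (r : Fin ℓ → R) {i₀ : Fin ℓ} {j : Fin n} (hj : u i₀ j ≠ 0) :
    ∑ i, u i j * r i = u i₀ j * r i₀ := by
  refine Finset.sum_eq_single i₀ (fun i _ hi => ?_) (fun h => absurd (Finset.mem_univ _) h)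
  rw [disj_apply hd (Ne.symm hi) hj, nf_zero_mul]

lemma sum_zero_at {ℓ : ℕ} {u : Fin ℓ → Fin n → R}
    (r : Fin ℓ → R) {j : Fin n} (hj : ∀ i, u i j = 0) :
    ∑ i, u i j * r i = 0 := by
  refine Finset.sum_eq_zero fun i _ => ?_
  rw [hj i, nf_zero_mul]

/-- Each `vsmul (u i) c` lies in `dirSum u`. -/
lemma vsmul_mem_dirSum {ℓ : ℕ} (u : Fin ℓ → Fin n → R) (i₀ : Fin ℓ) (c : R) :
    vsmul (u i₀) c ∈ dirSum u := by
  refine ⟨fun i => if i = i₀ then c else 0, ?_⟩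
  rw [Finset.sum_eq_single i₀ (fun i _ hi => by simp [hi, vsmul_zero]) (by simp)]
  simp


section Struct
variable {ℓ : ℕ} {u : Fin ℓ → Fin n → R}
  (hu : ∀ i, u i ≠ 0) (hd : ∀ i j, i ≠ j → supp (u i) ∩ supp (u j) = ∅)

/-- If `v ∈ dirSum u` is nonzero at `j`, some generator's support contains `j`
and is contained in `supp v`. -/
lemma exists_gen_supp_subset (hd : ∀ i j, i ≠ j → supp (u i) ∩ supp (u j) = ∅)
    {v : Fin n → R} (hv : v ∈ dirSum u) {j : Fin n} (hj : v j ≠ 0) :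
    ∃ i, u i j ≠ 0 ∧ supp (u i) ⊆ supp v := by
  obtain ⟨r, hr⟩ := mem_dirSum_iff.mp hv
  by_cases hz : ∀ i, u i j = 0
  · exact absurd (by rw [hr j, sum_zero_at r hz]) hj
  push_neg at hz
  obtain ⟨i, hi⟩ := hz
  have hri : r i ≠ 0 := by
    intro h0
    apply hj
    rw [hr j, sum_collapse hd r hi, h0, nf_mul_zero]
  refine ⟨i, hi, fun k hk => ?_⟩
  have : v k = u i k * r i := by rw [hr k, sum_collapse hd r hk]
  rw [mem_supp, this]
  exact nf_mul_ne_zero hk hri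

/-- Elements of `dirSum u` supported inside one generator's support are scalar
multiples of that generator. -/
lemma line_char (hu : ∀ i, u i ≠ 0) (hd : ∀ i j, i ≠ j → supp (u i) ∩ supp (u j) = ∅)
    {v : Fin n → R} (hv : v ∈ dirSum u) {i₀ : Fin ℓ}
    (hs : supp v ⊆ supp (u i₀)) : ∃ c : R, v = vsmul (u i₀) c := by
  obtain ⟨r, hr⟩ := mem_dirSum_iff.mp hv
  refine ⟨r i₀, funext fun j => ?_⟩
  rw [vsmul_apply]
  by_cases hj : u i₀ j ≠ 0
  · rw [hr j, sum_collapse hd r hj]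
  push_neg at hj
  rw [hj, nf_zero_mul]
  by_contra hvj
  obtain ⟨i, hij, hsub⟩ := exists_gen_supp_subset hd hv hvj
  have hii : i ≠ i₀ := fun h => hij (by rw [h, hj])
  obtain ⟨k, hk⟩ := exists_mem_supp (hu i)
  exact (hs (hsub hk)) (disj_apply hd hii hk)

/-- Minimal nonzero elements of a subgroup. -/
def MinVec (T : Set (Fin n → R)) (v : Fin n → R) : Prop :=
  v ∈ T ∧ v ≠ 0 ∧ ∀ w ∈ T, w ≠ 0 → supp w ⊆ supp v → supp v ⊆ supp w

lemma minVec_iff (hu : ∀ i, u i ≠ 0) (hd : ∀ i j, i ≠ j → supp (u i) ∩ supp (u j) = ∅)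
    {v : Fin n → R} :
    MinVec (dirSum u) v ↔ ∃ i c, c ≠ 0 ∧ v = vsmul (u i) c := by
  constructor
  · rintro ⟨hvT, hv0, hmin⟩
    obtain ⟨j, hj⟩ := exists_mem_supp hv0
    obtain ⟨i, hij, hsub⟩ := exists_gen_supp_subset hd hvT hj
    have huiT : u i ∈ dirSum u := by
      simpa [vsmul_one] using vsmul_mem_dirSum u i 1
    have hvsub : supp v ⊆ supp (u i) := hmin (u i) huiT (hu i) hsub
    obtain ⟨c, hc⟩ := line_char hu hd hvT hvsub
    refine ⟨i, c, ?_, hc⟩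
    intro h0
    rw [h0, vsmul_zero] at hc
    exact hv0 hc
  · rintro ⟨i, c, hc, rfl⟩
    refine ⟨vsmul_mem_dirSum u i c, vsmul_ne_zero (hu i) hc, fun w hwT hw0 hws => ?_⟩
    rw [supp_vsmul hc] at hws ⊢
    obtain ⟨k, hk⟩ := exists_mem_supp hw0
    obtain ⟨i', hik, hsub'⟩ := exists_gen_supp_subset hd hwT hk
    have hii : i' = i := by
      by_contra hne
      obtain ⟨m, hm⟩ := exists_mem_supp (hu i')
      exact (hws (hsub' hm)) (disj_apply hd hne hm)
    exact hii ▸ hsub'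

end Struct


/-- Normalized vector: first nonzero coordinate equals 1. -/
def Nzd {n : ℕ} (v : Fin n → R) : Prop := ∃ j, v j = 1 ∧ ∀ k, k < j → v k = 0

lemma Nzd.ne_zero {v : Fin n → R} (h : Nzd v) : v ≠ 0 := by
  obtain ⟨j, h1, -⟩ := h
  intro h0
  rw [h0] at h1
  exact Nearfield.one_ne_zero h1.symm

lemma supp_eq_empty_iff {v : Fin n → R} : supp v = ∅ ↔ v = 0 := by
  constructor
  · intro h
    funext k
    by_contra hk
    exact absurd (h ▸ hk : k ∈ (∅ : Set (Fin n))) (Set.notMem_empty k)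
  · rintro rfl; ext k; simp [supp]

lemma exists_least_supp {v : Fin n → R} (hv : v ≠ 0) :
    ∃ j, v j ≠ 0 ∧ ∀ k, k < j → v k = 0 := by
  classical
  set s : Finset (Fin n) := Finset.univ.filter (fun k => v k ≠ 0) with hs
  obtain ⟨j₀, hj₀⟩ := exists_mem_supp hv
  have hne : s.Nonempty := ⟨j₀, by simp [hs, hj₀]⟩
  refine ⟨s.min' hne, ?_, fun k hk => ?_⟩
  · have := s.min'_mem hne
    simp only [hs, Finset.mem_filter] at this
    exact this.2
  · by_contra hkv
    have : s.min' hne ≤ k := s.min'_le k (by simp [hs, hkv])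
    exact absurd hk (not_lt.mpr this)

lemma exists_nzd_scalar {v : Fin n → R} (hv : v ≠ 0) :
    ∃ c : R, c ≠ 0 ∧ Nzd (vsmul v c) := by
  obtain ⟨j, hj, hleast⟩ := exists_least_supp hv
  refine ⟨(v j)⁻¹, ?_, j, ?_, fun k hk => ?_⟩
  · intro h0
    have := Nearfield.mul_inv_cancel (v j) hj
    rw [h0, nf_mul_zero] at this
    exact Nearfield.one_ne_zero this.symm
  · exact Nearfield.mul_inv_cancel (v j) hj
  · rw [vsmul_apply, hleast k hk, nf_zero_mul]

lemma nzd_scalar_unique {v : Fin n → R} (hv : v ≠ 0) {c c' : R}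
    (hc : c ≠ 0) (hc' : c' ≠ 0) (h : Nzd (vsmul v c)) (h' : Nzd (vsmul v c')) :
    c = c' := by
  obtain ⟨j, hj1, hjl⟩ := h
  obtain ⟨j', hj1', hjl'⟩ := h'
  have hvj : v j ≠ 0 := by
    intro h0
    rw [vsmul_apply, h0, nf_zero_mul] at hj1
    exact Nearfield.one_ne_zero hj1.symm
  have hvj' : v j' ≠ 0 := by
    intro h0
    rw [vsmul_apply, h0, nf_zero_mul] at hj1'
    exact Nearfield.one_ne_zero hj1'.symm
  have hjj : j = j' := by
    rcases lt_trichotomy j j' with h | h | h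
    · exact absurd (hjl' j h : v j * c' = 0) (nf_mul_ne_zero hvj hc')
    · exact h
    · exact absurd (hjl j' h : v j' * c = 0) (nf_mul_ne_zero hvj' hc)
  subst hjj
  exact nf_mul_left_cancel hvj ((hj1 : v j * c = 1).trans (hj1' : v j * c' = 1).symm)

/-- Canonical generating set of a subgroup. -/
def canon {n : ℕ} (T : Set (Fin n → R)) : Set (Fin n → R) := {v | MinVec T v ∧ Nzd v}

lemma canon_dirSum {ℓ : ℕ} {u : Fin ℓ → Fin n → R}
    (hu : ∀ i, u i ≠ 0) (hd : ∀ i j, i ≠ j → supp (u i) ∩ supp (u j) = ∅)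
    (hn : ∀ i, Nzd (u i)) : canon (dirSum u) = Set.range u := by
  ext v
  constructor
  · rintro ⟨hmv, hnv⟩
    obtain ⟨i, c, hc, rfl⟩ := (minVec_iff hu hd).mp hmv
    refine ⟨i, ?_⟩
    have h1 : Nzd (vsmul (u i) 1) := by rw [vsmul_one]; exact hn i
    have := nzd_scalar_unique (hu i) hc (Nearfield.one_ne_zero) hnv h1
    rw [this, vsmul_one]
  · rintro ⟨i, rfl⟩
    exact ⟨(minVec_iff hu hd).mpr ⟨i, 1, Nearfield.one_ne_zero, (vsmul_one _).symm⟩, hn i⟩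

lemma dirSum_scale {ℓ : ℕ} {u : Fin ℓ → Fin n → R} {c : Fin ℓ → R}
    (hc : ∀ i, c i ≠ 0) : dirSum (fun i => vsmul (u i) (c i)) = dirSum u := by
  ext x
  constructor
  · rintro ⟨r, rfl⟩
    exact ⟨fun i => c i * r i, by simp only [vsmul_vsmul]⟩
  · rintro ⟨r, rfl⟩
    refine ⟨fun i => (c i)⁻¹ * r i, Finset.sum_congr rfl fun i _ => ?_⟩
    rw [vsmul_vsmul, ← nf_mul_assoc, Nearfield.mul_inv_cancel _ (hc i), nf_one_mul]

lemma inj_of_disj {ℓ : ℕ} {u : Fin ℓ → Fin n → R}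
    (hu : ∀ i, u i ≠ 0) (hd : ∀ i j, i ≠ j → supp (u i) ∩ supp (u j) = ∅) :
    Function.Injective u := by
  intro i j hij
  by_contra hne
  obtain ⟨k, hk⟩ := exists_mem_supp (hu i)
  exact (hij ▸ hk : u j k ≠ 0) (disj_apply hd hne hk)

/-- The set of canonical generating finsets. -/
def setN (R : Type*) [Nearfield R] (n ℓ : ℕ) : Set (Finset (Fin n → R)) :=
  {S | S.card = ℓ ∧ (∀ v ∈ S, Nzd v) ∧
    ∀ v ∈ S, ∀ w ∈ S, v ≠ w → supp v ∩ supp w = ∅}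

/-- The subgroup generated by a finset of vectors. -/
def Phi {n : ℕ} (S : Finset (Fin n → R)) : Set (Fin n → R) :=
  {x | ∃ r : (Fin n → R) → R, x = ∑ w ∈ S, vsmul w (r w)}

lemma Phi_image {ℓ : ℕ} {u : Fin ℓ → Fin n → R} (hinj : Function.Injective u) :
    Phi (Finset.image u Finset.univ) = dirSum u := by
  classical
  ext x
  constructor
  · rintro ⟨r, rfl⟩
    exact ⟨fun i => r (u i), by rw [Finset.sum_image (fun a _ b _ h => hinj h)]⟩
  · rintro ⟨r, rfl⟩
    refine ⟨Function.extend u r (fun _ => 0), ?_⟩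
    rw [Finset.sum_image (fun a _ b _ h => hinj h)]
    exact Finset.sum_congr rfl fun i _ => by rw [hinj.extend_apply]

lemma exists_enum {α : Type*} {S : Finset α} {ℓ : ℕ} (h : S.card = ℓ) :
    ∃ u : Fin ℓ → α, Function.Injective u ∧ ∀ x, x ∈ S ↔ ∃ i, u i = x := by
  classical
  let e : Fin ℓ ≃ {x // x ∈ S} := ((S.equivFin).trans (finCongr h)).symm
  refine ⟨fun i => (e i : α), Subtype.coe_injective.comp e.injective, fun x => ?_⟩
  constructor
  · intro hx; exact ⟨e.symm ⟨x, hx⟩, by simp⟩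
  · rintro ⟨i, rfl⟩; exact (e i).2

lemma Phi_eq_dirSum {ℓ : ℕ} {S : Finset (Fin n → R)} {u : Fin ℓ → Fin n → R}
    (hinj : Function.Injective u) (hmem : ∀ x, x ∈ S ↔ ∃ i, u i = x) :
    Phi S = dirSum u := by
  have hS : S = Finset.image u Finset.univ := by
    ext x; simp [hmem, eq_comm]
  rw [hS, Phi_image hinj]

lemma canon_Phi {ℓ : ℕ} {S : Finset (Fin n → R)} (hS : S ∈ setN R n ℓ) :
    canon (Phi S) = ↑S := by
  obtain ⟨u, hinj, himg⟩ := exists_enum hS.1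
  have hmem : ∀ i, u i ∈ S := fun i => (himg (u i)).mpr ⟨i, rfl⟩
  have hn : ∀ i, Nzd (u i) := fun i => hS.2.1 _ (hmem i)
  have hu : ∀ i, u i ≠ 0 := fun i => (hn i).ne_zero
  have hd : ∀ i j, i ≠ j → supp (u i) ∩ supp (u j) = ∅ :=
    fun i j hij => hS.2.2 _ (hmem i) _ (hmem j) (fun he => hij (hinj he))
  rw [Phi_eq_dirSum hinj himg, canon_dirSum hu hd hn]
  ext x
  simp only [Set.mem_range, Finset.coe_sort_coe, Finset.mem_coe]
  exact (himg x).symm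

lemma injOn_Phi {ℓ : ℕ} : Set.InjOn (Phi (R := R)) (setN R n ℓ) := by
  intro S hS S' hS' h
  exact Finset.coe_injective (by rw [← canon_Phi hS, ← canon_Phi hS', h])

lemma setT_eq (ℓ : ℕ) :
    {T : Set (Fin n → R) | ∃ u : Fin ℓ → Fin n → R,
        (∀ i, u i ≠ 0) ∧ (∀ i j, i ≠ j → supp (u i) ∩ supp (u j) = ∅) ∧
        T = dirSum u} = Phi '' setN R n ℓ := by
  ext T
  constructor
  · rintro ⟨u, hu, hd, rfl⟩
    choose c hc hnzd using fun i => exists_nzd_scalar (hu i)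
    set u' : Fin ℓ → Fin n → R := fun i => vsmul (u i) (c i) with hu'def
    have hu' : ∀ i, u' i ≠ 0 := fun i => vsmul_ne_zero (hu i) (hc i)
    have hsupp : ∀ i, supp (u' i) = supp (u i) := fun i => supp_vsmul (hc i)
    have hd' : ∀ i j, i ≠ j → supp (u' i) ∩ supp (u' j) = ∅ := by
      intro i j hij; rw [hsupp, hsupp]; exact hd i j hij
    have hinj' : Function.Injective u' := inj_of_disj hu' hd'
    refine ⟨Finset.image u' Finset.univ, ⟨?_, ?_, ?_⟩, ?_⟩
    · rw [Finset.card_image_of_injective _ hinj', Finset.card_univ, Fintype.card_fin]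
    · intro v hv
      obtain ⟨i, -, rfl⟩ := Finset.mem_image.mp hv
      exact hnzd i
    · intro v hv w hw hvw
      obtain ⟨i, -, rfl⟩ := Finset.mem_image.mp hv
      obtain ⟨j, -, rfl⟩ := Finset.mem_image.mp hw
      exact hd' i j (fun he => hvw (he ▸ rfl))
    · rw [Phi_image hinj', hu'def, dirSum_scale hc]
  · rintro ⟨S, hS, rfl⟩
    obtain ⟨u, hinj, himg⟩ := exists_enum hS.1
    have hmem : ∀ i, u i ∈ S := fun i => (himg (u i)).mpr ⟨i, rfl⟩
    have hn : ∀ i, Nzd (u i) := fun i => hS.2.1 _ (hmem i)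
    refine ⟨u, fun i => (hn i).ne_zero,
      fun i j hij => hS.2.2 _ (hmem i) _ (hmem j) (fun he => hij (hinj he)), ?_⟩
    rw [Phi_eq_dirSum hinj himg]

lemma ncard_setT (ℓ : ℕ) :
    Set.ncard {T : Set (Fin n → R) | ∃ u : Fin ℓ → Fin n → R,
        (∀ i, u i ≠ 0) ∧ (∀ i j, i ≠ j → supp (u i) ∩ supp (u j) = ∅) ∧
        T = dirSum u} = Set.ncard (setN R n ℓ) := by
  rw [setT_eq, Set.ncard_image_of_injOn injOn_Phi]

/-! ### snoc/init lemmas for the induction -/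

section Snoc
variable {v w : Fin (n+1) → R} {x y : Fin n → R} {c : R}

lemma snoc_zero_eq_self (h : v (Fin.last n) = 0) :
    Fin.snoc (Fin.init v) 0 = v := by
  have := Fin.snoc_init_self v
  rwa [h] at this

lemma init_apply (k : Fin n) : Fin.init v k = v k.castSucc := rfl

lemma nzd_init (hv : Nzd v) (h0 : Fin.init v ≠ 0) : Nzd (Fin.init v) := by
  obtain ⟨j, hj1, hjl⟩ := hv
  have hjne : j ≠ Fin.last n := by
    intro h
    apply h0
    funext k
    exact hjl k.castSucc (h ▸ Fin.castSucc_lt_last k)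
  obtain ⟨j', rfl⟩ := Fin.exists_castSucc_eq.mpr hjne
  refine ⟨j', by rwa [init_apply], fun k hk => ?_⟩
  rw [init_apply]
  exact hjl k.castSucc (Fin.castSucc_lt_castSucc_iff.mpr hk)

lemma init_ne_zero (hv : v ≠ 0) (h : v (Fin.last n) = 0) : Fin.init v ≠ 0 := by
  intro h0
  apply hv
  rw [← snoc_zero_eq_self h, h0]
  funext k
  refine Fin.lastCases ?_ ?_ k
  · simp
  · intro i; simp

lemma nzd_snoc (hx : Nzd x) : Nzd (Fin.snoc x c : Fin (n+1) → R) := by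
  obtain ⟨j, hj1, hjl⟩ := hx
  refine ⟨j.castSucc, by rwa [Fin.snoc_castSucc], fun k hk => ?_⟩
  have hkne : k ≠ Fin.last n := by
    intro h
    exact absurd (h ▸ hk) (not_lt.mpr (Fin.castSucc_lt_last j).le)
  obtain ⟨k', rfl⟩ := Fin.exists_castSucc_eq.mpr hkne
  rw [Fin.snoc_castSucc]
  exact hjl k' (Fin.castSucc_lt_castSucc_iff.mp hk)

lemma snoc_zero_ne_zero (hx : x ≠ 0) : (Fin.snoc x 0 : Fin (n+1) → R) ≠ 0 := by
  intro h
  apply hx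
  funext k
  have : (Fin.snoc x 0 : Fin (n+1) → R) k.castSucc = 0 := by rw [h]; rfl
  rwa [Fin.snoc_castSucc] at this

lemma mem_supp_snoc {m : Fin (n+1)} :
    m ∈ supp (Fin.snoc x c : Fin (n+1) → R) ↔
      (m = Fin.last n ∧ c ≠ 0) ∨ ∃ k, m = k.castSucc ∧ x k ≠ 0 := by
  refine Fin.lastCases ?_ ?_ m
  · constructor
    · intro h
      exact Or.inl ⟨rfl, by simpa [mem_supp, Fin.snoc_last] using h⟩
    · rintro (⟨-, h⟩ | ⟨k, hk, -⟩)
      · simpa [mem_supp, Fin.snoc_last] using h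
      · exact absurd hk.symm (Fin.castSucc_lt_last k).ne
  · intro k
    constructor
    · intro h
      exact Or.inr ⟨k, rfl, by simpa [mem_supp, Fin.snoc_castSucc] using h⟩
    · rintro (⟨h, -⟩ | ⟨k', hk', h⟩)
      · exact absurd h (Fin.castSucc_lt_last k).ne
      · cases Fin.castSucc_injective n hk'
        simpa [mem_supp, Fin.snoc_castSucc] using h

lemma supp_init_disj (hvw : supp v ∩ supp w = ∅) :
    supp (Fin.init v) ∩ supp (Fin.init w) = ∅ := by
  ext k
  simp only [Set.mem_inter_iff, Set.mem_empty_iff_false, iff_false, not_and, mem_supp]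
  intro hk hk'
  have : k.castSucc ∈ supp v ∩ supp w := ⟨hk, hk'⟩
  rw [hvw] at this
  exact this

lemma supp_snoc_disj (hxy : supp x ∩ supp y = ∅) {c' : R} (hcc : c = 0 ∨ c' = 0) :
    supp (Fin.snoc x c : Fin (n+1) → R) ∩ supp (Fin.snoc y c') = ∅ := by
  ext m
  simp only [Set.mem_inter_iff, Set.mem_empty_iff_false, iff_false, not_and]
  intro h1 h2
  rw [mem_supp_snoc] at h1 h2
  rcases h1 with ⟨rfl, hc⟩ | ⟨k, rfl, hk⟩
  · rcases h2 with ⟨-, hc'⟩ | ⟨k', hk', -⟩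
    · rcases hcc with h | h
      · exact hc h
      · exact hc' h
    · exact (Fin.castSucc_lt_last k').ne hk'.symm
  · rcases h2 with ⟨hlast, -⟩ | ⟨k', hk', hk2⟩
    · exact (Fin.castSucc_lt_last k).ne hlast
    · cases Fin.castSucc_injective n hk'
      have : k ∈ supp x ∩ supp y := ⟨hk, hk2⟩
      rw [hxy] at this
      exact this

end Snoc

section Count
variable (R n)

lemma snoc0_injective : Function.Injective (fun x : Fin n → R => (Fin.snoc x 0 : Fin (n+1) → R)) := by
  intro a b h
  funext k
  have := congrFun h k.castSucc
  simpa only [Fin.snoc_castSucc] using this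

/-- The `A` part: finsets avoiding the last coordinate. -/
lemma ncard_A (ℓ : ℕ) :
    Set.ncard {S | S ∈ setN R (n+1) ℓ ∧ ∀ v ∈ S, v (Fin.last n) = 0} =
      (setN R n ℓ).ncard := by
  set A := {S | S ∈ setN R (n+1) ℓ ∧ ∀ v ∈ S, v (Fin.last n) = 0} with hA
  set g : Finset (Fin (n+1) → R) → Finset (Fin n → R) := fun S => S.image Fin.init with hg
  have claim1 : ∀ S ∈ A, (g S).image (fun x => (Fin.snoc x 0 : Fin (n+1) → R)) = S := by
    rintro S ⟨-, hS0⟩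
    ext v
    rw [hg, Finset.image_image]
    simp only [Finset.mem_image, Function.comp_apply]
    constructor
    · rintro ⟨w, hw, rfl⟩
      rwa [snoc_zero_eq_self (hS0 w hw)]
    · intro hv
      exact ⟨v, hv, snoc_zero_eq_self (hS0 v hv)⟩
  have hinj : Set.InjOn g A := by
    intro S hS S' hS' h
    rw [← claim1 S hS, ← claim1 S' hS', h]
  have himg : g '' A = setN R n ℓ := by
    ext S'
    constructor
    · rintro ⟨S, ⟨⟨hcard, hnzd, hdisj⟩, hS0⟩, rfl⟩
      have hinit : Set.InjOn Fin.init (S : Set (Fin (n+1) → R)) := by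
        intro a ha b hb h
        rw [← snoc_zero_eq_self (hS0 a ha), ← snoc_zero_eq_self (hS0 b hb), h]
      refine ⟨?_, ?_, ?_⟩
      · rw [hg]
        rw [Finset.card_image_of_injOn hinit, hcard]
      · intro x hx
        obtain ⟨v, hv, rfl⟩ := Finset.mem_image.mp hx
        exact nzd_init (hnzd v hv) (init_ne_zero (hnzd v hv).ne_zero (hS0 v hv))
      · intro x hx y hy hxy
        obtain ⟨v, hv, rfl⟩ := Finset.mem_image.mp hx
        obtain ⟨w, hw, rfl⟩ := Finset.mem_image.mp hy
        exact supp_init_disj (hdisj v hv w hw (fun h => hxy (h ▸ rfl)))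
    · rintro ⟨hcard, hnzd, hdisj⟩
      refine ⟨S'.image (fun x => (Fin.snoc x 0 : Fin (n+1) → R)), ⟨⟨?_, ?_, ?_⟩, ?_⟩, ?_⟩
      · rw [Finset.card_image_of_injective _ (snoc0_injective R n), hcard]
      · intro v hv
        obtain ⟨x, hx, rfl⟩ := Finset.mem_image.mp hv
        exact nzd_snoc (hnzd x hx)
      · intro v hv w hw hvw
        obtain ⟨x, hx, rfl⟩ := Finset.mem_image.mp hv
        obtain ⟨y, hy, rfl⟩ := Finset.mem_image.mp hw
        exact supp_snoc_disj (hdisj x hx y hy (fun h => hvw (h ▸ rfl))) (Or.inl rfl)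
      · intro v hv
        obtain ⟨x, -, rfl⟩ := Finset.mem_image.mp hv
        exact Fin.snoc_last _ _
      · show Finset.image Fin.init (Finset.image (fun x => (Fin.snoc x 0 : Fin (n+1) → R)) S') = S'
        rw [Finset.image_image]
        ext x
        simp only [Finset.mem_image, Function.comp_apply, Fin.init_snoc]
        constructor
        · rintro ⟨y, hy, rfl⟩; exact hy
        · intro hx; exact ⟨x, hx, rfl⟩
  rw [← himg, Set.ncard_image_of_injOn hinj]


/-- The basis vector supported at the last coordinate. -/
def eL : Fin (n+1) → R := Fin.snoc (0 : Fin n → R) (1 : R)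

lemma eL_last : eL R n (Fin.last n) = 1 := Fin.snoc_last _ _

lemma eL_castSucc (k : Fin n) : eL R n k.castSucc = 0 := Fin.snoc_castSucc _ _ _

lemma eL_nzd : Nzd (eL R n) := by
  refine ⟨Fin.last n, eL_last R n, fun k hk => ?_⟩
  obtain ⟨k', rfl⟩ := Fin.exists_castSucc_eq.mpr hk.ne
  exact eL_castSucc R n k'

lemma mem_B_iff {ℓ : ℕ} {S : Finset (Fin (n+1) → R)} (hS : S ∈ setN R (n+1) ℓ) :
    (∃ v ∈ S, v (Fin.last n) ≠ 0 ∧ Fin.init v = 0) ↔ eL R n ∈ S := by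
  constructor
  · rintro ⟨v, hv, hvl, hvi⟩
    obtain ⟨j, hj1, hjl⟩ := hS.2.1 v hv
    have hj : j = Fin.last n := by
      by_contra hne
      obtain ⟨j', rfl⟩ := Fin.exists_castSucc_eq.mpr hne
      have : v j'.castSucc = 0 := by
        have := congrFun hvi j'
        rwa [init_apply] at this
      rw [this] at hj1
      exact Nearfield.one_ne_zero hj1.symm
    subst hj
    have : v = eL R n := by
      have h := Fin.snoc_init_self v
      rw [hvi, hj1] at h
      exact h.symm
    rwa [← this]
  · intro h
    refine ⟨eL R n, h, by rw [eL_last]; exact Nearfield.one_ne_zero, ?_⟩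
    funext k
    rw [init_apply, eL_castSucc]
    rfl

lemma supp_zero : supp (0 : Fin n → R) = ∅ := supp_eq_empty_iff.mpr rfl

lemma ncard_B (m : ℕ) :
    Set.ncard {S | S ∈ setN R (n+1) (m+1) ∧
        ∃ v ∈ S, v (Fin.last n) ≠ 0 ∧ Fin.init v = 0} = (setN R n m).ncard := by
  set B := {S | S ∈ setN R (n+1) (m+1) ∧
      ∃ v ∈ S, v (Fin.last n) ≠ 0 ∧ Fin.init v = 0} with hB
  set g : Finset (Fin (n+1) → R) → Finset (Fin n → R) :=
    fun S => (S.erase (eL R n)).image Fin.init with hg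
  have hBmem : ∀ S ∈ B, eL R n ∈ S := fun S hSB => (mem_B_iff R n hSB.1).mp hSB.2
  have hlast0 : ∀ S ∈ B, ∀ w ∈ S.erase (eL R n), w (Fin.last n) = 0 := by
    rintro S hSB w hw
    obtain ⟨hwne, hwS⟩ := Finset.mem_erase.mp hw
    by_contra hwl
    have hdisj := hSB.1.2.2 w hwS (eL R n) (hBmem S hSB) hwne
    have : Fin.last n ∈ supp w ∩ supp (eL R n) :=
      ⟨hwl, by rw [mem_supp, eL_last]; exact Nearfield.one_ne_zero⟩
    rw [hdisj] at this
    exact this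
  have claim1 : ∀ S ∈ B,
      insert (eL R n) ((g S).image (fun x => (Fin.snoc x 0 : Fin (n+1) → R))) = S := by
    intro S hSB
    have : (g S).image (fun x => (Fin.snoc x 0 : Fin (n+1) → R)) = S.erase (eL R n) := by
      ext v
      rw [hg, Finset.image_image]
      simp only [Finset.mem_image, Function.comp_apply]
      constructor
      · rintro ⟨w, hw, rfl⟩
        rwa [snoc_zero_eq_self (hlast0 S hSB w hw)]
      · intro hv
        exact ⟨v, hv, snoc_zero_eq_self (hlast0 S hSB v hv)⟩
    rw [this, Finset.insert_erase (hBmem S hSB)]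
  have hinj : Set.InjOn g B := by
    intro S hS S' hS' h
    rw [← claim1 S hS, ← claim1 S' hS', h]
  have himg : g '' B = setN R n m := by
    ext S'
    constructor
    · rintro ⟨S, hSB, rfl⟩
      have hcard := hSB.1.1
      have hnzd := hSB.1.2.1
      have hdisj := hSB.1.2.2
      have hinit : Set.InjOn Fin.init ((S.erase (eL R n) : Finset _) : Set (Fin (n+1) → R)) := by
        intro a ha b hb h
        rw [← snoc_zero_eq_self (hlast0 S hSB a ha), ← snoc_zero_eq_self (hlast0 S hSB b hb), h]
      refine ⟨?_, ?_, ?_⟩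
      · show ((S.erase (eL R n)).image Fin.init).card = m
        rw [Finset.card_image_of_injOn hinit, Finset.card_erase_of_mem (hBmem S hSB), hcard]
        rfl
      · intro x hx
        obtain ⟨v, hv, rfl⟩ := Finset.mem_image.mp hx
        have hvS := (Finset.mem_erase.mp hv).2
        exact nzd_init (hnzd v hvS) (init_ne_zero (hnzd v hvS).ne_zero (hlast0 S hSB v hv))
      · intro x hx y hy hxy
        obtain ⟨v, hv, rfl⟩ := Finset.mem_image.mp hx
        obtain ⟨w, hw, rfl⟩ := Finset.mem_image.mp hy
        exact supp_init_disj (hdisj v (Finset.mem_erase.mp hv).2 w (Finset.mem_erase.mp hw).2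
          (fun h => hxy (h ▸ rfl)))
    · rintro ⟨hcard, hnzd, hdisj⟩
      have hnotmem : eL R n ∉ S'.image (fun x => (Fin.snoc x 0 : Fin (n+1) → R)) := by
        intro h
        obtain ⟨x, -, hx⟩ := Finset.mem_image.mp h
        have h2 := congrFun hx (Fin.last n)
        rw [eL_last] at h2
        have h3 : (Fin.snoc x 0 : Fin (n+1) → R) (Fin.last n) = 0 := Fin.snoc_last _ _
        rw [h3] at h2
        exact Nearfield.one_ne_zero h2.symm
      have hsuppeL : ∀ x : Fin n → R,
          supp (Fin.snoc x 0 : Fin (n+1) → R) ∩ supp (eL R n) = ∅ := by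
        intro x
        have := supp_snoc_disj (x := x) (y := (0 : Fin n → R)) (c := (0:R)) (c' := (1:R))
          (by rw [supp_zero, Set.inter_empty]) (Or.inl rfl)
        exact this
      set S : Finset (Fin (n+1) → R) :=
        insert (eL R n) (S'.image (fun x => (Fin.snoc x 0 : Fin (n+1) → R))) with hSdef
      have hSN : S ∈ setN R (n+1) (m+1) := by
        refine ⟨?_, ?_, ?_⟩
        · rw [hSdef, Finset.card_insert_of_notMem hnotmem,
            Finset.card_image_of_injective _ (snoc0_injective R n), hcard]
        · intro v hv
          rcases Finset.mem_insert.mp hv with rfl | hv'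
          · exact eL_nzd R n
          · obtain ⟨x, hx, rfl⟩ := Finset.mem_image.mp hv'
            exact nzd_snoc (hnzd x hx)
        · intro v hv w hw hvw
          rcases Finset.mem_insert.mp hv with rfl | hv' <;>
            rcases Finset.mem_insert.mp hw with rfl | hw'
          · exact absurd rfl hvw
          · obtain ⟨y, hy, rfl⟩ := Finset.mem_image.mp hw'
            rw [Set.inter_comm]
            exact hsuppeL y
          · obtain ⟨x, hx, rfl⟩ := Finset.mem_image.mp hv'
            exact hsuppeL x
          · obtain ⟨x, hx, rfl⟩ := Finset.mem_image.mp hv'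
            obtain ⟨y, hy, rfl⟩ := Finset.mem_image.mp hw'
            exact supp_snoc_disj (hdisj x hx y hy (fun h => hvw (h ▸ rfl))) (Or.inl rfl)
      refine ⟨S, ⟨hSN, (mem_B_iff R n hSN).mpr (Finset.mem_insert_self _ _)⟩, ?_⟩
      show ((S.erase (eL R n)).image Fin.init) = S'
      rw [hSdef, Finset.erase_insert hnotmem, Finset.image_image]
      ext x
      simp only [Finset.mem_image, Function.comp_apply, Fin.init_snoc]
      constructor
      · rintro ⟨y, hy, rfl⟩; exact hy
      · intro hx; exact ⟨x, hx, rfl⟩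
  rw [← himg, Set.ncard_image_of_injOn hinj]

variable {ℓ : ℕ}

/-- The parameter set for the `C` part. -/
def setE (ℓ : ℕ) : Set (Finset (Fin n → R) × (Fin n → R) × R) :=
  {p | p.1 ∈ setN R n ℓ ∧ p.2.1 ∈ p.1 ∧ p.2.2 ≠ 0}

/-- The gluing map for the `C` part. -/
noncomputable def psi (p : Finset (Fin n → R) × (Fin n → R) × R) :
    Finset (Fin (n+1) → R) :=
  insert (Fin.snoc p.2.1 p.2.2) ((p.1.erase p.2.1).image (fun x => (Fin.snoc x 0 : Fin (n+1) → R)))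

lemma psi_mem_setN {p : Finset (Fin n → R) × (Fin n → R) × R} (hp : p ∈ setE R n ℓ) :
    psi R n p ∈ setN R (n+1) ℓ ∧
      (Fin.snoc p.2.1 p.2.2 : Fin (n+1) → R) ∈ psi R n p ∧
      (∀ u ∈ psi R n p, u (Fin.last n) ≠ 0 → u = Fin.snoc p.2.1 p.2.2) ∧
      (psi R n p).image Fin.init = p.1 := by
  obtain ⟨S', w, c⟩ := p
  obtain ⟨⟨hcard, hnzd, hdisj⟩, hw, hc⟩ := hp
  have hvlast : (Fin.snoc w c : Fin (n+1) → R) (Fin.last n) = c := Fin.snoc_last _ _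
  have hnotmem : (Fin.snoc w c : Fin (n+1) → R) ∉
      (S'.erase w).image (fun x => (Fin.snoc x 0 : Fin (n+1) → R)) := by
    intro h
    obtain ⟨x, -, hx⟩ := Finset.mem_image.mp h
    have h2 := congrFun hx (Fin.last n)
    have h3 : (Fin.snoc x 0 : Fin (n+1) → R) (Fin.last n) = 0 := Fin.snoc_last _ _
    rw [h3, hvlast] at h2
    exact hc h2.symm
  have hlast0 : ∀ x : Fin n → R, (Fin.snoc x 0 : Fin (n+1) → R) (Fin.last n) = 0 :=
    fun x => Fin.snoc_last _ _
  have hspecial : ∀ u ∈ psi R n (S', w, c), u (Fin.last n) ≠ 0 → u = Fin.snoc w c := by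
    intro u hu hul
    rcases Finset.mem_insert.mp hu with rfl | hu'
    · rfl
    · obtain ⟨x, -, rfl⟩ := Finset.mem_image.mp hu'
      exact absurd (hlast0 x) hul
  refine ⟨⟨?_, ?_, ?_⟩, Finset.mem_insert_self _ _, hspecial, ?_⟩
  · rw [psi, Finset.card_insert_of_notMem hnotmem,
      Finset.card_image_of_injective _ (snoc0_injective R n),
      Finset.card_erase_of_mem hw, hcard]
    exact Nat.succ_pred_eq_of_pos (hcard ▸ Finset.card_pos.mpr ⟨w, hw⟩)
  · intro v hv
    rcases Finset.mem_insert.mp hv with rfl | hv'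
    · exact nzd_snoc (hnzd w hw)
    · obtain ⟨x, hx, rfl⟩ := Finset.mem_image.mp hv'
      exact nzd_snoc (hnzd x (Finset.mem_erase.mp hx).2)
  · intro v hv u hu hvu
    rcases Finset.mem_insert.mp hv with rfl | hv' <;>
      rcases Finset.mem_insert.mp hu with rfl | hu'
    · exact absurd rfl hvu
    · obtain ⟨y, hy, rfl⟩ := Finset.mem_image.mp hu'
      exact supp_snoc_disj
        (hdisj w hw y (Finset.mem_erase.mp hy).2 (Ne.symm (Finset.mem_erase.mp hy).1))
        (Or.inr rfl)
    · obtain ⟨x, hx, rfl⟩ := Finset.mem_image.mp hv'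
      exact supp_snoc_disj
        (hdisj x (Finset.mem_erase.mp hx).2 w hw (Finset.mem_erase.mp hx).1)
        (Or.inl rfl)
    · obtain ⟨x, hx, rfl⟩ := Finset.mem_image.mp hv'
      obtain ⟨y, hy, rfl⟩ := Finset.mem_image.mp hu'
      exact supp_snoc_disj
        (hdisj x (Finset.mem_erase.mp hx).2 y (Finset.mem_erase.mp hy).2
          (fun h => hvu (h ▸ rfl)))
        (Or.inl rfl)
  · rw [psi, Finset.image_insert, Finset.image_image]
    have h1 : Fin.init (Fin.snoc w c : Fin (n+1) → R) = w := Fin.init_snoc _ _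
    have h2 : (S'.erase w).image (Fin.init ∘ fun x => (Fin.snoc x 0 : Fin (n+1) → R)) =
        S'.erase w := by
      ext z
      simp only [Finset.mem_image, Function.comp_apply, Fin.init_snoc]
      constructor
      · rintro ⟨y, hy, rfl⟩; exact hy
      · intro hz; exact ⟨z, hz, rfl⟩
    rw [h1, h2, Finset.insert_erase hw]

lemma injOn_psi : Set.InjOn (psi R n) (setE R n ℓ) := by
  rintro p hp p' hp' h
  obtain ⟨hpN, hpmem, hpsp, hpimg⟩ := psi_mem_setN R n hp
  obtain ⟨hp'N, hp'mem, hp'sp, hp'img⟩ := psi_mem_setN R n hp'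
  have hlast : (Fin.snoc p.2.1 p.2.2 : Fin (n+1) → R) (Fin.last n) = p.2.2 := Fin.snoc_last _ _
  have heq : (Fin.snoc p.2.1 p.2.2 : Fin (n+1) → R) = Fin.snoc p'.2.1 p'.2.2 := by
    refine hp'sp _ (h ▸ hpmem) ?_
    rw [hlast]
    exact hp.2.2
  have hw : p.2.1 = p'.2.1 := by
    have := congrArg Fin.init heq
    rwa [Fin.init_snoc, Fin.init_snoc] at this
  have hc : p.2.2 = p'.2.2 := by
    have := congrFun heq (Fin.last n)
    rwa [Fin.snoc_last, Fin.snoc_last] at this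
  have hS : p.1 = p'.1 := by rw [← hpimg, ← hp'img, h]
  exact Prod.ext hS (Prod.ext hw hc)

lemma image_psi :
    psi R n '' setE R n ℓ =
      {S | S ∈ setN R (n+1) ℓ ∧ ∃ v ∈ S, v (Fin.last n) ≠ 0 ∧ Fin.init v ≠ 0} := by
  ext S
  constructor
  · rintro ⟨p, hp, rfl⟩
    obtain ⟨hpN, hpmem, -, -⟩ := psi_mem_setN R n hp
    refine ⟨hpN, Fin.snoc p.2.1 p.2.2, hpmem, ?_, ?_⟩
    · rw [Fin.snoc_last]; exact hp.2.2
    · rw [Fin.init_snoc]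
      exact (hp.1.2.1 _ hp.2.1).ne_zero
  · rintro ⟨⟨hcard, hnzd, hdisj⟩, v, hv, hvl, hvi⟩
    have hx0 : ∀ x ∈ S, x ≠ v → x (Fin.last n) = 0 := by
      intro x hx hxv
      by_contra hxl
      have hd := hdisj x hx v hv hxv
      have : Fin.last n ∈ supp x ∩ supp v := ⟨hxl, hvl⟩
      rw [hd] at this
      exact this
    have hinitinj : Set.InjOn Fin.init (S : Set (Fin (n+1) → R)) := by
      have key : ∀ a ∈ S, ∀ b ∈ S, a ≠ b → Fin.init a = Fin.init b → False := by
        intro a ha b hb hab h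
        by_cases hbv : b = v
        · subst hbv
          obtain ⟨k, hk⟩ := exists_mem_supp hvi
          have h1 : Fin.init a k ≠ 0 := by rw [h]; exact hk
          have : k.castSucc ∈ supp a ∩ supp b := ⟨h1, hk⟩
          rw [hdisj a ha b hb hab] at this
          exact this
        · by_cases hav : a = v
          · subst hav
            obtain ⟨k, hk⟩ := exists_mem_supp hvi
            have h1 : Fin.init b k ≠ 0 := by rw [← h]; exact hk
            have : k.castSucc ∈ supp a ∩ supp b := ⟨hk, h1⟩
            rw [hdisj a ha b hb hab] at this
            exact this
          · apply hab
            rw [← snoc_zero_eq_self (hx0 a ha hav), ← snoc_zero_eq_self (hx0 b hb hbv), h]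
      intro a ha b hb h
      by_contra hab
      exact key a ha b hb hab h
    refine ⟨(S.image Fin.init, Fin.init v, v (Fin.last n)), ⟨⟨?_, ?_, ?_⟩, ?_, hvl⟩, ?_⟩
    · rw [Finset.card_image_of_injOn hinitinj, hcard]
    · intro x hx
      obtain ⟨a, ha, rfl⟩ := Finset.mem_image.mp hx
      by_cases hav : a = v
      · subst hav; exact nzd_init (hnzd a ha) hvi
      · exact nzd_init (hnzd a ha) (init_ne_zero (hnzd a ha).ne_zero (hx0 a ha hav))
    · intro x hx y hy hxy
      obtain ⟨a, ha, rfl⟩ := Finset.mem_image.mp hx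
      obtain ⟨b, hb, rfl⟩ := Finset.mem_image.mp hy
      exact supp_init_disj (hdisj a ha b hb (fun h => hxy (h ▸ rfl)))
    · exact Finset.mem_image_of_mem _ hv
    · show insert (Fin.snoc (Fin.init v) (v (Fin.last n)))
        (((S.image Fin.init).erase (Fin.init v)).image
          (fun x => (Fin.snoc x 0 : Fin (n+1) → R))) = S
      have h1 : (Fin.snoc (Fin.init v) (v (Fin.last n)) : Fin (n+1) → R) = v :=
        Fin.snoc_init_self v
      have h2 : (S.image Fin.init).erase (Fin.init v) = (S.erase v).image Fin.init := by
        ext z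
        simp only [Finset.mem_erase, Finset.mem_image]
        constructor
        · rintro ⟨hz, a, ha, rfl⟩
          exact ⟨a, ⟨fun h => hz (h ▸ rfl), ha⟩, rfl⟩
        · rintro ⟨a, ⟨hav, haS⟩, rfl⟩
          exact ⟨fun h => hav (hinitinj haS hv h), a, haS, rfl⟩
      have h3 : ((S.erase v).image Fin.init).image
          (fun x => (Fin.snoc x 0 : Fin (n+1) → R)) = S.erase v := by
        rw [Finset.image_image]
        ext z
        simp only [Finset.mem_image, Function.comp_apply]
        constructor
        · rintro ⟨a, ha, rfl⟩
          obtain ⟨hav, haS⟩ := Finset.mem_erase.mp ha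
          rwa [snoc_zero_eq_self (hx0 a haS hav)]
        · intro hz
          obtain ⟨hzv, hzS⟩ := Finset.mem_erase.mp hz
          exact ⟨z, hz, snoc_zero_eq_self (hx0 z hzS hzv)⟩
      rw [h1, h2, h3, Finset.insert_erase hv]

lemma ncard_setE [Fintype R] (ℓ : ℕ) :
    (setE R n ℓ).ncard = (setN R n ℓ).ncard * ℓ * (Fintype.card R - 1) := by
  classical
  set nz : Finset R := Finset.univ.erase 0 with hnz
  have hnzcard : nz.card = Fintype.card R - 1 := by
    rw [hnz, Finset.card_erase_of_mem (Finset.mem_univ 0), Finset.card_univ]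
  have hfin : (setN R n ℓ).Finite := Set.toFinite _
  set F : Finset (Finset (Fin n → R)) := hfin.toFinset with hF
  set E' : Finset (Finset (Fin n → R) × (Fin n → R) × R) :=
    F.biUnion (fun S' => {S'} ×ˢ (S' ×ˢ nz)) with hE'
  have hEeq : setE R n ℓ = ↑E' := by
    ext p
    simp only [hE', hnz, Finset.coe_biUnion, Set.mem_iUnion, Finset.mem_coe, Finset.mem_product,
      Finset.mem_singleton, Finset.mem_erase, Finset.mem_univ, and_true, hF,
      Set.Finite.mem_toFinset]
    constructor
    · rintro ⟨h1, h2, h3⟩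
      exact ⟨p.1, h1, rfl, h2, h3⟩
    · rintro ⟨S', hS', h1, h2, h3⟩
      exact ⟨h1 ▸ hS', h1 ▸ h2, h3⟩
  have hdisj : ∀ x ∈ F, ∀ y ∈ F, x ≠ y →
      Disjoint ({x} ×ˢ (x ×ˢ nz)) ({y} ×ˢ (y ×ˢ nz)) := by
    intro x hx y hy hxy
    rw [Finset.disjoint_left]
    intro p hp hq
    rw [Finset.mem_product, Finset.mem_singleton] at hp hq
    exact hxy (hp.1 ▸ hq.1 ▸ rfl)
  have hcardE : E'.card = F.card * (ℓ * (Fintype.card R - 1)) := by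
    rw [hE', Finset.card_biUnion hdisj]
    rw [Finset.sum_congr rfl (fun S' hS' => ?_), Finset.sum_const, smul_eq_mul]
    rw [Finset.card_product, Finset.card_product, Finset.card_singleton, one_mul, hnzcard]
    have : S'.card = ℓ := (hfin.mem_toFinset.mp hS').1
    rw [this]
  rw [hEeq, Set.ncard_coe_finset, hcardE, Set.ncard_eq_toFinset_card _ hfin, mul_assoc]

lemma ncard_C [Fintype R] (ℓ : ℕ) :
    Set.ncard {S | S ∈ setN R (n+1) ℓ ∧
        ∃ v ∈ S, v (Fin.last n) ≠ 0 ∧ Fin.init v ≠ 0} =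
      (setN R n ℓ).ncard * ℓ * (Fintype.card R - 1) := by
  rw [← image_psi, Set.ncard_image_of_injOn (injOn_psi R n), ncard_setE]

lemma setN_zero_zero : setN R 0 0 = {(∅ : Finset (Fin 0 → R))} := by
  ext S
  simp only [setN, Set.mem_setOf_eq, Set.mem_singleton_iff]
  constructor
  · rintro ⟨hcard, -, -⟩
    exact Finset.card_eq_zero.mp hcard
  · rintro rfl
    exact ⟨rfl, fun v hv => absurd hv (Finset.notMem_empty v),
      fun v hv => absurd hv (Finset.notMem_empty v)⟩

lemma setN_zero_succ (m : ℕ) : setN R 0 (m+1) = ∅ := by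
  ext S
  simp only [setN, Set.mem_setOf_eq, Set.mem_empty_iff_false, iff_false]
  rintro ⟨hcard, hnzd, -⟩
  have : S.Nonempty := Finset.card_pos.mp (by rw [hcard]; exact Nat.succ_pos m)
  obtain ⟨v, hv⟩ := this
  obtain ⟨j, -, -⟩ := hnzd v hv
  exact j.elim0

lemma setN_split (ℓ : ℕ) :
    setN R (n+1) ℓ =
      {S | S ∈ setN R (n+1) ℓ ∧ ∀ v ∈ S, v (Fin.last n) = 0} ∪
      ({S | S ∈ setN R (n+1) ℓ ∧ ∃ v ∈ S, v (Fin.last n) ≠ 0 ∧ Fin.init v = 0} ∪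
       {S | S ∈ setN R (n+1) ℓ ∧ ∃ v ∈ S, v (Fin.last n) ≠ 0 ∧ Fin.init v ≠ 0}) := by
  ext S
  constructor
  · intro hS
    by_cases h : ∀ v ∈ S, v (Fin.last n) = 0
    · exact Or.inl ⟨hS, h⟩
    · push_neg at h
      obtain ⟨v, hv, hvl⟩ := h
      by_cases hvi : Fin.init v = 0
      · exact Or.inr (Or.inl ⟨hS, v, hv, hvl, hvi⟩)
      · exact Or.inr (Or.inr ⟨hS, v, hv, hvl, hvi⟩)
  · rintro (h | h | h) <;> exact h.1

lemma setN_split_disj1 (ℓ : ℕ) :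
    Disjoint {S | S ∈ setN R (n+1) ℓ ∧ ∀ v ∈ S, v (Fin.last n) = 0}
      ({S | S ∈ setN R (n+1) ℓ ∧ ∃ v ∈ S, v (Fin.last n) ≠ 0 ∧ Fin.init v = 0} ∪
       {S | S ∈ setN R (n+1) ℓ ∧ ∃ v ∈ S, v (Fin.last n) ≠ 0 ∧ Fin.init v ≠ 0}) := by
  rw [Set.disjoint_left]
  rintro S ⟨-, hall⟩ (⟨-, v, hv, hvl, -⟩ | ⟨-, v, hv, hvl, -⟩) <;> exact hvl (hall v hv)

lemma setN_split_disj2 (ℓ : ℕ) :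
    Disjoint {S | S ∈ setN R (n+1) ℓ ∧ ∃ v ∈ S, v (Fin.last n) ≠ 0 ∧ Fin.init v = 0}
      {S | S ∈ setN R (n+1) ℓ ∧ ∃ v ∈ S, v (Fin.last n) ≠ 0 ∧ Fin.init v ≠ 0} := by
  rw [Set.disjoint_left]
  rintro S ⟨hS, v, hv, hvl, hvi⟩ ⟨-, w, hw, hwl, hwi⟩
  have hvw : v ≠ w := fun h => hwi (h ▸ hvi)
  have hd := hS.2.2 v hv w hw hvw
  have : Fin.last n ∈ supp v ∩ supp w := ⟨hvl, hwl⟩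
  rw [hd] at this
  exact this

lemma ncard_setN_succ_succ [Fintype R] (m : ℕ) :
    (setN R (n+1) (m+1)).ncard =
      (setN R n (m+1)).ncard + (setN R n m).ncard +
        (setN R n (m+1)).ncard * (m+1) * (Fintype.card R - 1) := by
  classical
  rw [setN_split R n (m+1), Set.ncard_union_eq (setN_split_disj1 R n (m+1))
      (Set.toFinite _) (Set.toFinite _),
    Set.ncard_union_eq (setN_split_disj2 R n (m+1)) (Set.toFinite _) (Set.toFinite _),
    ncard_A R n (m+1), ncard_B R n m, ncard_C R n (m+1)]
  ring

lemma ncard_setN_succ_zero [Fintype R] :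
    (setN R (n+1) 0).ncard = (setN R n 0).ncard := by
  classical
  have hB : {S | S ∈ setN R (n+1) 0 ∧ ∃ v ∈ S, v (Fin.last n) ≠ 0 ∧ Fin.init v = 0} = ∅ := by
    ext S
    simp only [Set.mem_setOf_eq, Set.mem_empty_iff_false, iff_false, not_and]
    rintro ⟨hcard, -, -⟩ ⟨v, hv, -, -⟩
    rw [Finset.card_eq_zero.mp hcard] at hv
    exact Finset.notMem_empty v hv
  have hC : {S | S ∈ setN R (n+1) 0 ∧ ∃ v ∈ S, v (Fin.last n) ≠ 0 ∧ Fin.init v ≠ 0} = ∅ := by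
    ext S
    simp only [Set.mem_setOf_eq, Set.mem_empty_iff_false, iff_false, not_and]
    rintro ⟨hcard, -, -⟩ ⟨v, hv, -, -⟩
    rw [Finset.card_eq_zero.mp hcard] at hv
    exact Finset.notMem_empty v hv
  rw [setN_split R n 0, hB, hC, Set.union_empty, Set.union_empty, ncard_A R n 0]

end Count
end Nearfield

namespace CountAux

lemma stirling2_eq_zero_of_lt : ∀ {m ℓ : ℕ}, m < ℓ → stirling2 m ℓ = 0 := by
  intro m
  induction m with
  | zero =>
    intro ℓ hℓ
    obtain ⟨k, rfl⟩ := Nat.exists_eq_add_of_lt hℓ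
    rfl
  | succ m ih =>
    intro ℓ hℓ
    obtain ⟨k, rfl⟩ : ∃ k, ℓ = k + 1 := ⟨ℓ - 1, by omega⟩
    show (k + 1) * stirling2 m (k + 1) + stirling2 m k = 0
    rw [ih (by omega), ih (by omega), Nat.mul_zero, Nat.add_zero]

/-- The closed-form count, in "ascending" form. -/
def G (q n ℓ : ℕ) : ℕ :=
  ∑ m ∈ Finset.range (n+1), n.choose m * stirling2 m ℓ * q ^ (m - ℓ)

lemma G_zero_zero (q : ℕ) : G q 0 0 = 1 := by simp [G, stirling2]

lemma G_zero_succ (q k : ℕ) : G q 0 (k+1) = 0 := by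
  simp [G, stirling2_eq_zero_of_lt (Nat.succ_pos k)]

lemma G_succ (q n ℓ : ℕ) :
    G q (n+1) ℓ =
      (∑ m ∈ Finset.range (n+1), n.choose m * stirling2 (m+1) ℓ * q ^ (m + 1 - ℓ)) +
        G q n ℓ := by
  have h1 : G q (n+1) ℓ =
      (∑ m ∈ Finset.range (n+1), (n+1).choose (m+1) * stirling2 (m+1) ℓ * q ^ (m+1-ℓ)) +
        (n+1).choose 0 * stirling2 0 ℓ * q ^ (0 - ℓ) := by
    rw [G, Finset.sum_range_succ']
  have h2 : ∀ m, (n+1).choose (m+1) = n.choose m + n.choose (m+1) :=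
    fun m => Nat.choose_succ_succ n m
  have h3 : G q n ℓ =
      (∑ m ∈ Finset.range (n+1), n.choose (m+1) * stirling2 (m+1) ℓ * q ^ (m+1-ℓ)) +
        n.choose 0 * stirling2 0 ℓ * q ^ (0 - ℓ) := by
    have := Finset.sum_range_succ'
      (fun m => n.choose m * stirling2 m ℓ * q ^ (m - ℓ)) (n+1)
    have h4 : ∑ m ∈ Finset.range (n+2), n.choose m * stirling2 m ℓ * q ^ (m - ℓ) =
        G q n ℓ + n.choose (n+1) * stirling2 (n+1) ℓ * q ^ (n+1-ℓ) := by
      rw [Finset.sum_range_succ]; rfl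
    rw [Nat.choose_eq_zero_of_lt (Nat.lt_succ_self n)] at h4
    simp only [Nat.zero_mul, Nat.add_zero] at h4
    rw [← h4, this]
  rw [h1, h3]
  have h5 : ∀ m, (n+1).choose (m+1) * stirling2 (m+1) ℓ * q ^ (m+1-ℓ) =
      n.choose m * stirling2 (m+1) ℓ * q ^ (m+1-ℓ) +
        n.choose (m+1) * stirling2 (m+1) ℓ * q ^ (m+1-ℓ) := by
    intro m
    rw [h2 m, Nat.add_mul, Nat.add_mul]
  rw [Finset.sum_congr rfl (fun m _ => h5 m), Finset.sum_add_distrib]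
  have h6 : (n+1).choose 0 = n.choose 0 := by rw [Nat.choose_zero_right, Nat.choose_zero_right]
  rw [h6]
  ring

lemma G_succ_zero (q n : ℕ) : G q (n+1) 0 = G q n 0 := by
  rw [G_succ]
  have : ∀ m ∈ Finset.range (n+1), n.choose m * stirling2 (m+1) 0 * q ^ (m + 1 - 0) = 0 := by
    intro m _
    show n.choose m * (0:ℕ) * q ^ (m+1) = 0
    ring
  rw [Finset.sum_congr rfl this, Finset.sum_const, smul_eq_mul, Nat.mul_zero, Nat.zero_add]

lemma G_succ_succ (q n k : ℕ) :
    G q (n+1) (k+1) = G q n (k+1) + G q n k + G q n (k+1) * (k+1) * q := by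
  rw [G_succ]
  have hterm : ∀ m, n.choose m * stirling2 (m+1) (k+1) * q ^ (m + 1 - (k+1)) =
      (n.choose m * stirling2 m (k+1) * q ^ (m - (k+1))) * (k+1) * q +
        n.choose m * stirling2 m k * q ^ (m - k) := by
    intro m
    have hs : stirling2 (m+1) (k+1) = (k+1) * stirling2 m (k+1) + stirling2 m k := rfl
    have hp : m + 1 - (k+1) = m - k := by omega
    rw [hs, hp]
    by_cases hm : k + 1 ≤ m
    · have : m - k = (m - (k+1)) + 1 := by omega
      rw [this, pow_succ]
      ring
    · have h1 : stirling2 m (k+1) = 0 := stirling2_eq_zero_of_lt (by omega)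
      rw [h1]
      ring
  rw [Finset.sum_congr rfl (fun m _ => hterm m), Finset.sum_add_distrib]
  have : ∑ m ∈ Finset.range (n+1),
      (n.choose m * stirling2 m (k+1) * q ^ (m - (k+1))) * (k+1) * q =
      G q n (k+1) * (k+1) * q := by
    rw [G, Finset.sum_mul, Finset.sum_mul]
  rw [this]
  show G q n (k+1) * (k+1) * q + G q n k + G q n (k+1) = _
  ring

/-- Reindexing: descending form equals ascending form. -/
lemma descending_eq_G (q n ℓ : ℕ) :
    ∑ d ∈ Finset.range (n - ℓ + 1), n.choose d * stirling2 (n - d) ℓ * q ^ (n - d - ℓ) =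
      G q n ℓ := by
  by_cases hℓ : ℓ ≤ n
  · have h1 : ∀ d ∈ Finset.range (n - ℓ + 1),
        n.choose d * stirling2 (n - d) ℓ * q ^ (n - d - ℓ) =
        n.choose (n - d) * stirling2 (n - d) ℓ * q ^ (n - d - ℓ) := by
      intro d hd
      rw [Finset.mem_range] at hd
      rw [Nat.choose_symm (by omega)]
    rw [Finset.sum_congr rfl h1]
    have h2 : ∑ d ∈ Finset.range (n - ℓ + 1),
        n.choose (n - d) * stirling2 (n - d) ℓ * q ^ (n - d - ℓ) =
        ∑ d ∈ Finset.range (n + 1),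
        n.choose (n - d) * stirling2 (n - d) ℓ * q ^ (n - d - ℓ) := by
      refine Finset.sum_subset ?_ ?_
      · intro x hx
        rw [Finset.mem_range] at hx ⊢
        omega
      · intro x hx hnx
        rw [Finset.mem_range] at hx hnx
        have : n - x < ℓ := by omega
        rw [stirling2_eq_zero_of_lt this]
        ring
    have h3 := Finset.sum_range_reflect
      (fun m => n.choose m * stirling2 m ℓ * q ^ (m - ℓ)) (n + 1)
    simp only [Nat.add_sub_cancel] at h3
    rw [h2, G]
    exact h3
  · push_neg at hℓ
    have h0 : n - ℓ = 0 := by omega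
    have hL : ∑ d ∈ Finset.range (n - ℓ + 1),
        n.choose d * stirling2 (n - d) ℓ * q ^ (n - d - ℓ) = 0 := by
      rw [h0, Finset.range_one, Finset.sum_singleton, Nat.sub_zero,
        stirling2_eq_zero_of_lt hℓ]
      ring
    have hR : G q n ℓ = 0 := by
      rw [G]
      refine Finset.sum_eq_zero (fun m hm => ?_)
      rw [Finset.mem_range] at hm
      rw [stirling2_eq_zero_of_lt (show m < ℓ by omega)]
      ring
    rw [hL, hR]

end CountAux

namespace Nearfield

lemma ncard_setN_eq (R : Type*) [Nearfield R] [Fintype R] (n ℓ : ℕ) :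
    (setN R n ℓ).ncard = CountAux.G (Fintype.card R - 1) n ℓ := by
  induction n generalizing ℓ with
  | zero =>
    cases ℓ with
    | zero => rw [setN_zero_zero, Set.ncard_singleton, CountAux.G_zero_zero]
    | succ m => rw [setN_zero_succ, Set.ncard_empty, CountAux.G_zero_succ]
  | succ n ih =>
    cases ℓ with
    | zero => rw [ncard_setN_succ_zero, ih, CountAux.G_succ_zero]
    | succ m => rw [ncard_setN_succ_succ, ih, ih, CountAux.G_succ_succ]

end Nearfield

/-- The number of `R`-subgroups of `R^n` of dimension `ℓ` equals
`Σ_{d=0}^{n−ℓ} C(n,d)·S(n−d,ℓ)·(q−1)^{n−d−ℓ}`. -/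
theorem count_subgroups {R : Type*} [Nearfield R] [Fintype R]
    (hR : IsProper R) (n ℓ : ℕ) :
    Set.ncard {T : Set (Fin n → R) | ∃ u : Fin ℓ → Fin n → R,
        (∀ i, u i ≠ 0) ∧ (∀ i j, i ≠ j → supp (u i) ∩ supp (u j) = ∅) ∧
        T = dirSum u} =
      ∑ d ∈ Finset.range (n - ℓ + 1),
        n.choose d * stirling2 (n - d) ℓ * (Fintype.card R - 1) ^ (n - d - ℓ) := by
  rw [ncard_setT ℓ, ncard_setN_eq]
  exact (CountAux.descending_eq_G _ n ℓ).symm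
end
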